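/- arXiv:1701.04875 — 7 statements merged into one kernel-verified Lean document; each statement's English description precedes it below -/
import Mathlib

section
/- Let Ω ⊆ ℂ be a bounded domain (nonempty bounded connected open set) and let J ⊆ ∂Ω be a nonempty compact set without isolated points. Let S(Ω,J) be the set of all f ∈ R(Ω) such that f has infinite difference quotients at every point z₀ ∈ J along J. Then S(Ω,J) is either empty or a dense Gδ subset of R(Ω). -/
open scoped Classical in
/-- Extend a continuous map on `E` to all of `ℂ` by zero. -/
noncomputable def extendFn (E : Set ℂ) (f : C(E, ℂ)) : ℂ → ℂ :=
  fun z => if h : z ∈ E then f ⟨z, h⟩ else 0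

/-- `f` has infinite difference quotients at `z₀` along `J`:
`limsup_{z → z₀, z ∈ J \ {z₀}} |f z - f z₀| / |z - z₀| = +∞`. -/
def HasInfDiffQuot (f : ℂ → ℂ) (J : Set ℂ) (z₀ : ℂ) : Prop :=
  ∀ M > (0:ℝ), ∀ δ > (0:ℝ), ∃ z ∈ J,
    0 < ‖z - z₀‖ ∧ ‖z - z₀‖ < δ ∧
      M * ‖z - z₀‖ < ‖f z - f z₀‖

/-- Restrictions to `E` of rational functions with poles off `E`. -/
def ratRestrict (E : Set ℂ) : Set C(E, ℂ) :=
  {f | ∃ p q : Polynomial ℂ, (∀ z ∈ E, q.eval z ≠ 0) ∧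
    ∀ z : E, f z = p.eval (z : ℂ) / q.eval (z : ℂ)}

lemma extendFn_eq {E : Set ℂ} (f : C(E, ℂ)) {z : ℂ} (h : z ∈ E) :
    extendFn E f z = f ⟨z, h⟩ := by
  unfold extendFn
  exact dif_pos h

lemma ratRestrict_add_smul {E : Set ℂ} {r x : C(E, ℂ)}
    (hr : r ∈ ratRestrict E) (hx : x ∈ ratRestrict E) (c : ℂ) :
    r + c • x ∈ ratRestrict E := by
  obtain ⟨p₀, q₀, hq₀, hr⟩ := hr
  obtain ⟨p, q, hq, hx⟩ := hx
  refine ⟨p₀ * q + Polynomial.C c * p * q₀, q₀ * q,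
    fun z hz => by simp [mul_ne_zero (hq₀ z hz) (hq z hz)], fun z => ?_⟩
  have h1 := hq₀ z z.2
  have h2 := hq z z.2
  simp only [ContinuousMap.add_apply, ContinuousMap.smul_apply, hr z, hx z, smul_eq_mul,
    Polynomial.eval_add, Polynomial.eval_mul, Polynomial.eval_C]
  field_simp

lemma rat_lip {E : Set ℂ} (hE : IsCompact E) {r : C(E, ℂ)} (hr : r ∈ ratRestrict E)
    (z₀ : E) :
    ∃ L : ℝ, 0 ≤ L ∧ ∀ z : E, ‖r z - r z₀‖ ≤ L * ‖(z : ℂ) - (z₀ : ℂ)‖ := by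
  obtain ⟨p, q, hq, hform⟩ := hr
  have hne : E.Nonempty := ⟨z₀.1, z₀.2⟩
  obtain ⟨zm, hzm, hmin⟩ := hE.exists_isMinOn hne
    ((continuous_norm.comp q.continuous_aeval).continuousOn)
  set m : ℝ := ‖q.eval zm‖ with hm
  have hm0 : 0 < m := by
    have := hq zm hzm
    simpa [hm, norm_pos_iff] using this
  set hpoly : Polynomial ℂ := p * Polynomial.C (q.eval (z₀ : ℂ)) - Polynomial.C (p.eval (z₀ : ℂ)) * q with hhp
  have hroot : hpoly.IsRoot (z₀ : ℂ) := by
    simp [hhp, Polynomial.IsRoot, mul_comm]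
  obtain ⟨h₁, hfac⟩ := Polynomial.dvd_iff_isRoot.mpr hroot
  obtain ⟨zB, hzB, hmax⟩ := hE.exists_isMaxOn hne
    ((continuous_norm.comp h₁.continuous_aeval).continuousOn)
  set B : ℝ := ‖h₁.eval zB‖ with hB
  have hB0 : 0 ≤ B := norm_nonneg _
  refine ⟨B / m ^ 2, by positivity, fun z => ?_⟩
  have hqz : q.eval (z : ℂ) ≠ 0 := hq z z.2
  have hqz₀ : q.eval (z₀ : ℂ) ≠ 0 := hq z₀ z₀.2
  have hqza : 0 < ‖q.eval (z : ℂ)‖ := norm_pos_iff.mpr hqz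
  have hqz₀a : 0 < ‖q.eval (z₀ : ℂ)‖ := norm_pos_iff.mpr hqz₀
  have key : p.eval (z : ℂ) * q.eval (z₀ : ℂ) - p.eval (z₀ : ℂ) * q.eval (z : ℂ)
      = ((z : ℂ) - (z₀ : ℂ)) * h₁.eval (z : ℂ) := by
    have := congrArg (Polynomial.eval (z : ℂ)) hfac
    simpa [hhp] using this
  have hdiff : r z - r z₀ = (((z : ℂ) - (z₀ : ℂ)) * h₁.eval (z : ℂ)) /
      (q.eval (z : ℂ) * q.eval (z₀ : ℂ)) := by
    rw [hform z, hform z₀, div_sub_div _ _ hqz hqz₀]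
    congr 1
    linear_combination key
  rw [hdiff, norm_div, norm_mul, norm_mul]
  have h1 : ‖h₁.eval (z : ℂ)‖ ≤ B := hmax z.2
  have h4 : m ^ 2 ≤ ‖q.eval (z : ℂ)‖ * ‖q.eval (z₀ : ℂ)‖ := by
    rw [sq]
    exact mul_le_mul (hmin z.2) (hmin z₀.2) hm0.le (norm_nonneg _)
  rw [div_le_iff₀ (by positivity)]
  have h5 : ‖h₁.eval (z : ℂ)‖ ≤ B / m ^ 2 * (‖q.eval (z : ℂ)‖ * ‖q.eval (z₀ : ℂ)‖) := by
    calc ‖h₁.eval (z : ℂ)‖ ≤ B := h1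
      _ = B / m ^ 2 * m ^ 2 := by field_simp
      _ ≤ B / m ^ 2 * (‖q.eval (z : ℂ)‖ * ‖q.eval (z₀ : ℂ)‖) := by
          gcongr
  calc ‖(z:ℂ) - (z₀:ℂ)‖ * ‖h₁.eval (z : ℂ)‖
      ≤ ‖(z:ℂ) - (z₀:ℂ)‖ * (B / m ^ 2 * (‖q.eval (z : ℂ)‖ * ‖q.eval (z₀ : ℂ)‖)) := by
        gcongr
    _ = B / m ^ 2 * ‖(z:ℂ) - (z₀:ℂ)‖ * (‖q.eval (z : ℂ)‖ * ‖q.eval (z₀ : ℂ)‖) := by ring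

lemma open_aux {E : Set ℂ} (hEc : IsCompact E) {J : Set ℂ} (hJE : J ⊆ E) (hJcpt : IsCompact J)
    {K d : ℝ} (hK : 0 ≤ K) (hd : 0 < d) :
    IsOpen {f : C(E, ℂ) | ∀ z₀ ∈ J, ∃ z ∈ J, 0 < ‖z - z₀‖ ∧
      ‖z - z₀‖ < d ∧
      K * ‖z - z₀‖ < ‖extendFn E f z - extendFn E f z₀‖} := by
  haveI : CompactSpace E := isCompact_iff_compactSpace.mp hEc
  rw [Metric.isOpen_iff]
  intro f hf
  rcases J.eq_empty_or_nonempty with hJ | hJne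
  · exact ⟨1, one_pos, fun g _ => by simp [Set.mem_setOf_eq, hJ]⟩
  choose w hwJ hw1 hw2 hw3 using hf
  set m : (z₀ : ℂ) → z₀ ∈ J → ℝ := fun z₀ h =>
    ‖extendFn E f (w z₀ h) - extendFn E f z₀‖ - K * ‖w z₀ h - z₀‖
    with hm_def
  have hm : ∀ z₀ (h : z₀ ∈ J), 0 < m z₀ h := fun z₀ h => sub_pos.mpr (hw3 z₀ h)
  have hrad : ∀ z₀ (h : z₀ ∈ J), ∃ ρ : ℝ, 0 < ρ ∧
      (∀ y ∈ E, ‖y - z₀‖ < ρ →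
        ‖extendFn E f y - extendFn E f z₀‖ < m z₀ h / 4) ∧
      ρ ≤ ‖w z₀ h - z₀‖ / 2 ∧
      ρ ≤ (d - ‖w z₀ h - z₀‖) / 2 ∧ K * ρ ≤ m z₀ h / 4 := by
    intro z₀ h
    have hmm : 0 < m z₀ h := hm z₀ h
    have ha : 0 < ‖w z₀ h - z₀‖ := hw1 z₀ h
    have had : ‖w z₀ h - z₀‖ < d := hw2 z₀ h
    have hK1 : (0:ℝ) < K + 1 := by linarith
    have hc := (map_continuous f).continuousAt (x := (⟨z₀, hJE h⟩ : E))
    rw [Metric.continuousAt_iff] at hc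
    obtain ⟨ρ₀, hρ₀, hc⟩ := hc (m z₀ h / 4) (by positivity)
    refine ⟨min ρ₀ (min (‖w z₀ h - z₀‖ / 2)
      (min ((d - ‖w z₀ h - z₀‖) / 2) (m z₀ h / 4 / (K + 1)))), ?_, ?_, ?_, ?_, ?_⟩
    · refine lt_min hρ₀ (lt_min (by linarith) (lt_min (by linarith) (by positivity)))
    · intro y hyE hlt
      have hdy : dist (⟨y, hyE⟩ : E) (⟨z₀, hJE h⟩ : E) < ρ₀ := by
        rw [Subtype.dist_eq, Complex.dist_eq]
        exact lt_of_lt_of_le hlt (min_le_left _ _)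
      have := hc hdy
      rw [Complex.dist_eq] at this
      rwa [extendFn_eq f hyE, extendFn_eq f (hJE h)]
    · exact le_trans (min_le_right _ _) (min_le_left _ _)
    · exact le_trans (min_le_right _ _) (le_trans (min_le_right _ _) (min_le_left _ _))
    · have hle : min ρ₀ (min (‖w z₀ h - z₀‖ / 2)
          (min ((d - ‖w z₀ h - z₀‖) / 2) (m z₀ h / 4 / (K + 1)))) ≤
          m z₀ h / 4 / (K + 1) :=
        le_trans (min_le_right _ _) (le_trans (min_le_right _ _) (min_le_right _ _))
      calc K * min ρ₀ (min (‖w z₀ h - z₀‖ / 2)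
          (min ((d - ‖w z₀ h - z₀‖) / 2) (m z₀ h / 4 / (K + 1))))
          ≤ K * (m z₀ h / 4 / (K + 1)) := mul_le_mul_of_nonneg_left hle hK
        _ = m z₀ h / 4 * (K / (K + 1)) := by ring
        _ ≤ m z₀ h / 4 * 1 := by
            have h2 : K / (K + 1) ≤ 1 := by rw [div_le_one hK1]; linarith
            exact mul_le_mul_of_nonneg_left h2 (div_nonneg hmm.le (by norm_num))
        _ = m z₀ h / 4 := mul_one _
  choose ρ hρ0 hρc hρ1 hρ2 hρ3 using hrad
  obtain ⟨t, hcover⟩ := hJcpt.elim_nhds_subcover' (fun z₀ h => Metric.ball z₀ (ρ z₀ h))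
    (fun z₀ h => Metric.ball_mem_nhds _ (hρ0 z₀ h))
  obtain ⟨z₁, hz₁⟩ := hJne
  have hz₁' := hcover hz₁
  rw [Set.mem_iUnion₂] at hz₁'
  obtain ⟨x₁, hx₁, -⟩ := hz₁'
  have ht : t.Nonempty := ⟨x₁, hx₁⟩
  refine ⟨t.inf' ht (fun x => m x.1 x.2 / 8), ?_, ?_⟩
  · rw [gt_iff_lt, Finset.lt_inf'_iff]
    intro x _
    have := hm x.1 x.2
    positivity
  intro g hg
  rw [Metric.mem_ball] at hg
  intro z₀' hz₀'
  have hz := hcover hz₀'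
  rw [Set.mem_iUnion₂] at hz
  obtain ⟨x, hxt, hball⟩ := hz
  rw [Metric.mem_ball, Complex.dist_eq] at hball
  set z₀ := (x : ℂ)
  have hz₀J : z₀ ∈ J := x.2
  set W := w z₀ x.2 with hW
  have hWJ : W ∈ J := hwJ z₀ x.2
  set mm := m z₀ x.2 with hmm_def
  set ρρ := ρ z₀ x.2 with hρρ
  have hmm : 0 < mm := hm z₀ x.2
  have hεle : t.inf' ht (fun x => m x.1 x.2 / 8) ≤ mm / 8 := Finset.inf'_le _ hxt
  have hgf : dist g f < mm / 8 := lt_of_lt_of_le hg hεle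
  have ha : 0 < ‖W - z₀‖ := hw1 z₀ x.2
  have had : ‖W - z₀‖ < d := hw2 z₀ x.2
  have hρa : ρρ ≤ ‖W - z₀‖ / 2 := hρ1 z₀ x.2
  have hρd : ρρ ≤ (d - ‖W - z₀‖) / 2 := hρ2 z₀ x.2
  have hρK : K * ρρ ≤ mm / 4 := hρ3 z₀ x.2
  have T1 : ‖W - z₀‖ ≤ ‖W - z₀'‖ + ‖z₀' - z₀‖ :=
    norm_sub_le_norm_sub_add_norm_sub W z₀' z₀
  have T2 : ‖W - z₀'‖ ≤ ‖W - z₀‖ + ‖z₀' - z₀‖ := by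
    have := norm_sub_le_norm_sub_add_norm_sub W z₀ z₀'
    rwa [norm_sub_rev z₀ z₀'] at this
  refine ⟨W, hWJ, by linarith, by linarith, ?_⟩
  have hWE : W ∈ E := hJE hWJ
  have hz₀E : z₀ ∈ E := hJE hz₀J
  have hz₀'E : z₀' ∈ E := hJE hz₀'
  have e4 : ‖extendFn E f W - extendFn E g W‖ ≤ mm / 8 := by
    rw [extendFn_eq f hWE, extendFn_eq g hWE, ← Complex.dist_eq]
    exact le_trans (ContinuousMap.dist_apply_le_dist _) (by rw [dist_comm] at hgf; linarith)
  have e5 : ‖extendFn E g z₀' - extendFn E f z₀'‖ ≤ mm / 8 := by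
    rw [extendFn_eq f hz₀'E, extendFn_eq g hz₀'E, ← Complex.dist_eq]
    exact le_trans (ContinuousMap.dist_apply_le_dist _) hgf.le
  have e6 : ‖extendFn E f z₀' - extendFn E f z₀‖ < mm / 4 :=
    hρc z₀ x.2 z₀' hz₀'E hball
  have e7 : ‖extendFn E f W - extendFn E f z₀‖ = K * ‖W - z₀‖ + mm := by
    rw [hmm_def, hm_def]; ring
  have e8 : K * ‖W - z₀'‖ ≤ K * ‖W - z₀‖ + K * ρρ := by
    have : K * ‖W - z₀'‖ ≤ K * (‖W - z₀‖ + ρρ) :=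
      mul_le_mul_of_nonneg_left (by linarith) hK
    linarith [this]
  have e1 : ‖extendFn E f W - extendFn E f z₀‖ ≤
      ‖extendFn E f W - extendFn E f z₀'‖ +
      ‖extendFn E f z₀' - extendFn E f z₀‖ :=
    norm_sub_le_norm_sub_add_norm_sub _ _ _
  have e2 : ‖extendFn E f W - extendFn E f z₀'‖ ≤
      ‖extendFn E f W - extendFn E g W‖ +
      ‖extendFn E g W - extendFn E f z₀'‖ :=
    norm_sub_le_norm_sub_add_norm_sub _ _ _
  have e3 : ‖extendFn E g W - extendFn E f z₀'‖ ≤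
      ‖extendFn E g W - extendFn E g z₀'‖ +
      ‖extendFn E g z₀' - extendFn E f z₀'‖ :=
    norm_sub_le_norm_sub_add_norm_sub _ _ _
  linarith

/-- Let `Ω ⊆ ℂ` be a bounded domain and `J ⊆ ∂Ω` a nonempty compact set without isolated
points.  Let `R(Ω)` be the closure in `C(cl Ω, ℂ)` (with the topology of uniform convergence,
which on the compact set `cl Ω` is the compact-open topology) of the restrictions of rational
functions with poles off `cl Ω`, and let `S(Ω, J)` be the set of `f ∈ R(Ω)` having infinite
difference quotients at every point of `J` along `J`.  Then `S(Ω, J)` is either empty or a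
dense `Gδ` subset of `R(Ω)`. -/
theorem dichotomy_bounded (Ω : Set ℂ) (hΩopen : IsOpen Ω) (hΩconn : IsConnected Ω)
    (hΩbdd : Bornology.IsBounded Ω)
    (J : Set ℂ) (hJne : J.Nonempty) (hJfr : J ⊆ frontier Ω) (hJcpt : IsCompact J)
    (hJperf : ∀ z ∈ J, z ∈ closure (J \ {z})) :
    let R : Set C(closure Ω, ℂ) := closure (ratRestrict (closure Ω))
    let S : Set ↥R :=
      {f | ∀ z₀ ∈ J, HasInfDiffQuot (extendFn (closure Ω) f.1) J z₀}
    S = ∅ ∨ (Dense S ∧ IsGδ S) := by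
  intro R S
  have hcl : IsCompact (closure Ω) :=
    Metric.isCompact_of_isClosed_isBounded isClosed_closure hΩbdd.closure
  haveI : CompactSpace (closure Ω) := isCompact_iff_compactSpace.mp hcl
  have hJE : J ⊆ closure Ω := hJfr.trans frontier_subset_closure
  -- S as a countable intersection of open sets
  have hS_eq : S = ⋂ (k : ℕ) (n : ℕ), (Subtype.val ⁻¹'
      {f : C(closure Ω, ℂ) | ∀ z₀ ∈ J, ∃ z ∈ J, 0 < ‖z - z₀‖ ∧
        ‖z - z₀‖ < 1 / ((n : ℝ) + 1) ∧
        ((k : ℝ) + 1) * ‖z - z₀‖ <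
          ‖extendFn (closure Ω) f z - extendFn (closure Ω) f z₀‖} : Set ↥R) := by
    ext f
    simp only [S, Set.mem_setOf_eq, Set.mem_iInter, Set.mem_preimage]
    constructor
    · intro hf k n z₀ hz₀
      exact hf z₀ hz₀ ((k : ℝ) + 1) (by positivity) (1 / ((n : ℝ) + 1)) (by positivity)
    · intro hf z₀ hz₀ M hM δ hδ
      obtain ⟨n, hn⟩ := exists_nat_one_div_lt hδ
      obtain ⟨k, hk⟩ := exists_nat_gt M
      obtain ⟨z, hzJ, h1, h2, h3⟩ := hf k n z₀ hz₀
      refine ⟨z, hzJ, h1, h2.trans hn, lt_of_le_of_lt ?_ h3⟩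
      have : (M : ℝ) ≤ (k : ℝ) + 1 := by
        have := hk.le
        linarith
      exact mul_le_mul_of_nonneg_right this (norm_nonneg _)
  have hGδ : IsGδ S := by
    rw [hS_eq]
    exact IsGδ.iInter fun k => IsGδ.iInter fun n =>
      ((open_aux hcl hJE hJcpt (K := (k : ℝ) + 1) (d := 1 / ((n : ℝ) + 1))
        (by positivity) (by positivity)).preimage continuous_subtype_val).isGδ
  rcases S.eq_empty_or_nonempty with hS | ⟨f₀, hf₀S⟩
  · exact Or.inl hS
  right
  refine ⟨?_, hGδ⟩
  rw [Metric.dense_iff]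
  intro x ε hε
  have hx : (x : C(closure Ω, ℂ)) ∈ R := x.2
  rw [Metric.mem_closure_iff] at hx
  obtain ⟨r, hrRat, hr⟩ := hx (ε / 2) (by positivity)
  set N : ℝ := ‖(f₀ : C(closure Ω, ℂ))‖ with hN
  have hN0 : 0 ≤ N := norm_nonneg _
  set c : ℝ := ε / (2 * (N + 1)) with hc_def
  have hc : 0 < c := by positivity
  set g : C(closure Ω, ℂ) := r + (c : ℂ) • (f₀ : C(closure Ω, ℂ)) with hg_def
  have hgR : g ∈ R := by
    have hmaps : Set.MapsTo (fun y : C(closure Ω, ℂ) => r + (c : ℂ) • y)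
        (ratRestrict (closure Ω)) (ratRestrict (closure Ω)) :=
      fun y hy => ratRestrict_add_smul hrRat hy _
    exact map_mem_closure (continuous_const.add (continuous_const_smul _)) f₀.2 hmaps
  refine ⟨⟨g, hgR⟩, ?_, ?_⟩
  · -- distance estimate
    rw [Metric.mem_ball, Subtype.dist_eq]
    have hdgr : dist g r = c * N := by
      rw [dist_eq_norm]
      have : g - r = (c : ℂ) • (f₀ : C(closure Ω, ℂ)) := by
        rw [hg_def]; abel
      rw [this, norm_smul]
      simp [hN, abs_of_pos hc]
    have hcN : c * N < ε / 2 := by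
      rw [hc_def]
      rw [div_mul_eq_mul_div, div_lt_iff₀ (by positivity)]
      nlinarith
    calc dist g (x : C(closure Ω, ℂ)) ≤ dist g r + dist r (x : C(closure Ω, ℂ)) :=
          dist_triangle _ _ _
      _ < ε / 2 + ε / 2 := by
          rw [dist_comm r]
          exact add_lt_add (by rw [hdgr]; exact hcN) hr
      _ = ε := by ring
  · -- membership in S
    show ∀ z₀ ∈ J, HasInfDiffQuot (extendFn (closure Ω) g) J z₀
    intro z₀ hz₀
    obtain ⟨L, hL0, hL⟩ := rat_lip hcl hrRat ⟨z₀, hJE hz₀⟩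
    intro M hM δ hδ
    have hf₀q := hf₀S z₀ hz₀ ((M + L) / c) (div_pos (by linarith) hc) δ hδ
    obtain ⟨z, hzJ, h1, h2, h3⟩ := hf₀q
    refine ⟨z, hzJ, h1, h2, ?_⟩
    have hzE : z ∈ closure Ω := hJE hzJ
    have hz₀E : z₀ ∈ closure Ω := hJE hz₀
    rw [extendFn_eq _ hzE, extendFn_eq _ hz₀E] at h3 ⊢
    set A : ℂ := (f₀ : C(closure Ω, ℂ)) ⟨z, hzE⟩ - (f₀ : C(closure Ω, ℂ)) ⟨z₀, hz₀E⟩ with hA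
    set Bc : ℂ := r ⟨z, hzE⟩ - r ⟨z₀, hz₀E⟩ with hBc
    have hgdiff : g ⟨z, hzE⟩ - g ⟨z₀, hz₀E⟩ = (c : ℂ) * A + Bc := by
      simp only [hg_def, ContinuousMap.add_apply, ContinuousMap.smul_apply, smul_eq_mul,
        hA, hBc]
      ring
    rw [hgdiff]
    have hcA : ‖(c : ℂ) * A‖ = c * ‖A‖ := by
      rw [norm_mul, Complex.norm_real, Real.norm_eq_abs, abs_of_pos hc]
    have tri : ‖(c : ℂ) * A‖ ≤ ‖(c : ℂ) * A + Bc‖ + ‖Bc‖ := by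
      calc ‖(c : ℂ) * A‖ = ‖((c : ℂ) * A + Bc) + (-Bc)‖ := by ring_nf
        _ ≤ ‖(c : ℂ) * A + Bc‖ + ‖-Bc‖ := norm_add_le _ _
        _ = ‖(c : ℂ) * A + Bc‖ + ‖Bc‖ := by rw [norm_neg]
    have hBle : ‖Bc‖ ≤ L * ‖z - z₀‖ := hL ⟨z, hzE⟩
    have hAgt : (M + L) / c * ‖z - z₀‖ < ‖A‖ := h3
    have hclcA : c * ((M + L) / c * ‖z - z₀‖) = (M + L) * ‖z - z₀‖ := by
      field_simp
    have step : (M + L) * ‖z - z₀‖ < c * ‖A‖ := by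
      rw [← hclcA]
      exact mul_lt_mul_of_pos_left hAgt hc
    have : c * ‖A‖ = ‖(c : ℂ) * A‖ := hcA.symm
    linarith [tri, hBle, step, hcA]
end

section
/- Let a ∈ (0,1), let b be an odd positive integer with a·b > 1 + 3π/2, and define g(z) = Σ_{n=0}^{∞} aⁿ z^{bⁿ} for |z| ≤ 1. Then g is continuous on the closed unit disc, holomorphic on the open unit disc D = {z : |z| < 1}, and g has infinite difference quotients at every point z₀ of the unit circle 𝕋 = {z : |z| = 1} along 𝕋. -/
open Complex Real

lemma expI_sub_one_le (t : ℝ) : ‖Complex.exp (t * I) - 1‖ ≤ |t| := by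
  have h1 : Complex.exp (t * I) - 1 = ((Real.cos t - 1 : ℝ) : ℂ) + (Real.sin t : ℝ) * I := by
    rw [Complex.exp_mul_I]; push_cast; ring
  rw [h1, Complex.norm_add_mul_I]
  rw [show |t| = Real.sqrt (t ^ 2) by rw [Real.sqrt_sq_eq_abs]]
  apply Real.sqrt_le_sqrt
  have h2 : Real.sin (t / 2) ^ 2 ≤ (t / 2) ^ 2 := Real.sin_sq_le_sq
  have h3 : Real.cos (t / 2) ^ 2 = 1 / 2 + Real.cos t / 2 := by
    have := Real.cos_sq (t / 2); rwa [show 2 * (t / 2) = t by ring] at this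
  have h4 : Real.sin (t / 2) ^ 2 + Real.cos (t / 2) ^ 2 = 1 := Real.sin_sq_add_cos_sq _
  nlinarith [Real.sin_sq_add_cos_sq t]

lemma expI_sub_expI_le (x y : ℝ) :
    ‖Complex.exp (x * I) - Complex.exp (y * I)‖ ≤ |x - y| := by
  have h : Complex.exp (x * I) - Complex.exp (y * I)
      = Complex.exp (y * I) * (Complex.exp ((x - y : ℝ) * I) - 1) := by
    rw [mul_sub, ← Complex.exp_add, mul_one]; push_cast; ring_nf
  rw [h, norm_mul, Complex.norm_exp_ofReal_mul_I, one_mul]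
  exact expI_sub_one_le _

lemma exp_pi_int (n : ℤ) : Complex.exp ((n : ℂ) * (Real.pi * I)) = (-1) ^ n := by
  rw [Complex.exp_int_mul, Complex.exp_pi_mul_I]

lemma neg_one_zpow_mul_odd (c : ℤ) {d : ℤ} (hd : Odd d) :
    ((-1 : ℂ)) ^ (c * d) = (-1) ^ c := by
  rcases Int.even_or_odd c with hc | hc
  · rw [hc.neg_one_zpow, (hc.mul_right d).neg_one_zpow]
  · rw [hc.neg_one_zpow, (hc.mul hd).neg_one_zpow]

lemma exp_pow (x : ℝ) (N : ℕ) :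
    Complex.exp ((x : ℂ) * I) ^ N = Complex.exp (((N * x : ℝ) : ℂ) * I) := by
  rw [← Complex.exp_nat_mul]; push_cast; ring_nf

lemma wsummable {a : ℝ} (ha₀ : 0 < a) (ha₁ : a < 1) (b : ℕ) (z : ℂ)
    (hz : ‖z‖ ≤ 1) : Summable (fun n : ℕ => (a : ℂ) ^ n * z ^ (b ^ n)) := by
  apply Summable.of_norm_bounded (g := fun n : ℕ => a ^ n)
    (summable_geometric_of_lt_one ha₀.le ha₁)
  intro n
  rw [norm_mul, norm_pow, norm_pow, Complex.norm_real, Real.norm_of_nonneg ha₀.le]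
  calc a ^ n * ‖z‖ ^ b ^ n ≤ a ^ n * 1 ^ b ^ n := by gcongr
    _ = a ^ n := by simp

set_option maxHeartbeats 1000000 in
lemma main_part (a : ℝ) (ha₀ : 0 < a) (ha₁ : a < 1)
    (b : ℕ) (hb_odd : Odd b) (hb_pos : 0 < b)
    (hab : 1 + 3 * Real.pi / 2 < a * b) (z₀ : ℂ) (hz₀ : z₀ ∈ Metric.sphere (0:ℂ) 1) :
    HasInfDiffQuot (fun z => ∑' n : ℕ, (a : ℂ) ^ n * z ^ (b ^ n)) (Metric.sphere 0 1) z₀ := by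
  have hπ : (0:ℝ) < π := Real.pi_pos
  have hb0 : (0:ℝ) < b := by exact_mod_cast hb_pos
  have hab1 : 1 < a * b := by nlinarith
  have hb1 : (1:ℝ) < b := by nlinarith
  have habs : ‖z₀‖ = 1 := by
    simpa using mem_sphere_zero_iff_norm.mp hz₀
  set θ₀ := Complex.arg z₀ with hθ₀def
  have hz₀e : Complex.exp ((θ₀ : ℂ) * I) = z₀ := by
    have := Complex.norm_mul_exp_arg_mul_I z₀
    rwa [habs, Complex.ofReal_one, one_mul] at this
  intro M hM δ hδ
  set C : ℝ := 1 - (3 * π / 2) / (a * b - 1) with hCdef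
  have hC : 0 < C := by
    rw [hCdef]
    have h1 : 3 * π / 2 < a * b - 1 := by linarith
    have : (3 * π / 2) / (a * b - 1) < 1 := (div_lt_one (by linarith)).mpr h1
    linarith
  obtain ⟨m₁, hm₁⟩ := pow_unbounded_of_one_lt (3 * π / (2 * δ)) hb1
  obtain ⟨m₂, hm₂⟩ := pow_unbounded_of_one_lt (M * (3 * π / 2) / C) hab1
  set m := max m₁ m₂ with hmdef
  have hbm : 3 * π / (2 * δ) < (b:ℝ) ^ m :=
    hm₁.trans_le (pow_le_pow_right₀ hb1.le (le_max_left _ _))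
  have habm : M * (3 * π / 2) / C < (a * b) ^ m :=
    hm₂.trans_le (pow_le_pow_right₀ hab1.le (le_max_right _ _))
  have hbmpos : (0:ℝ) < (b:ℝ) ^ m := by positivity
  set α : ℤ := round ((b:ℝ) ^ m * θ₀ / π) with hαdef
  set r : ℝ := (b:ℝ) ^ m * θ₀ / π - α with hrdef
  have hr : |r| ≤ 1 / 2 := abs_sub_round _
  have hr1 : 1 / 2 ≤ 1 - r := by have := abs_le.mp hr; linarith [this.2]
  have hr2 : 1 - r ≤ 3 / 2 := by have := abs_le.mp hr; linarith [this.1]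
  set Δ : ℝ := π * (1 - r) / (b:ℝ) ^ m with hΔdef
  set θ : ℝ := θ₀ + Δ with hθdef
  clear_value θ Δ r α m C
  have hΔlb : 0 < Δ := by
    rw [hΔdef]
    apply div_pos (mul_pos hπ (by linarith : (0:ℝ) < 1 - r)) hbmpos
  have hΔub : Δ ≤ (3 * π / 2) / (b:ℝ) ^ m := by
    rw [hΔdef]
    gcongr
    nlinarith [hπ, hr1]
  have hkey : (b:ℝ) ^ m * θ = π * (α + 1) := by
    rw [hθdef, hΔdef, hrdef]
    field_simp
    ring
  -- the comparison point z
  set z : ℂ := Complex.exp ((θ : ℂ) * I) with hzdef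
  clear_value z
  have hbodd : ∀ k : ℕ, Odd ((b:ℤ) ^ k) := fun k => by
    exact_mod_cast (hb_odd.pow : Odd (b ^ k))
  set u : ℂ := (-1) ^ α with hudef
  clear_value u
  have hmθ₀ : (b:ℝ) ^ m * θ₀ = π * (α + r) := by
    rw [hrdef]; field_simp; ring
  have hzpow : ∀ k : ℕ, z ^ (b ^ (k + m)) = -u := by
    intro k
    rw [hzdef, exp_pow]
    have h1 : ((b ^ (k + m) : ℕ) * θ : ℝ) = ((α + 1) * (b:ℤ) ^ k : ℤ) * π := by
      push_cast
      rw [pow_add]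
      linear_combination ((b:ℝ) ^ k) * hkey
    rw [h1,
      show ((((α + 1) * (b:ℤ) ^ k : ℤ) * π : ℝ) : ℂ) * I
        = (((α + 1) * (b:ℤ) ^ k : ℤ) : ℂ) * (π * I) by push_cast; ring,
      exp_pi_int, neg_one_zpow_mul_odd _ (hbodd k),
      zpow_add₀ (by norm_num : (-1:ℂ) ≠ 0), zpow_one, hudef]
    ring
  have hz₀pow : ∀ k : ℕ,
      z₀ ^ (b ^ (k + m)) = u * Complex.exp (((π * ((b:ℝ) ^ k * r)) : ℝ) * I) := by
    intro k
    rw [← hz₀e, exp_pow]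
    have h1 : ((b ^ (k + m) : ℕ) * θ₀ : ℝ)
        = (α * (b:ℤ) ^ k : ℤ) * π + π * ((b:ℝ) ^ k * r) := by
      push_cast
      rw [pow_add]
      linear_combination ((b:ℝ) ^ k) * hmθ₀
    rw [h1,
      show (((α * (b:ℤ) ^ k : ℤ) * π + π * ((b:ℝ) ^ k * r) : ℝ) : ℂ) * I
        = ((α * (b:ℤ) ^ k : ℤ) : ℂ) * (π * I) + ((π * ((b:ℝ) ^ k * r) : ℝ) : ℂ) * I by
          push_cast; ring,
      Complex.exp_add, exp_pi_int, neg_one_zpow_mul_odd _ (hbodd k), hudef]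
  -- series setup
  have habsz : ‖z‖ = 1 := by rw [hzdef]; exact Complex.norm_exp_ofReal_mul_I θ
  have hsz : Summable (fun n : ℕ => (a:ℂ) ^ n * z ^ (b ^ n)) :=
    wsummable ha₀ ha₁ b z habsz.le
  have hsz₀ : Summable (fun n : ℕ => (a:ℂ) ^ n * z₀ ^ (b ^ n)) :=
    wsummable ha₀ ha₁ b z₀ habs.le
  set F : ℕ → ℂ := fun n => (a:ℂ) ^ n * (z ^ (b ^ n) - z₀ ^ (b ^ n)) with hFdef
  clear_value F
  have hF : Summable F := by
    have := hsz.sub hsz₀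
    apply this.congr
    intro n
    simp only [hFdef]
    ring
  have hgdiff : (∑' n : ℕ, (a:ℂ) ^ n * z ^ (b ^ n)) - (∑' n : ℕ, (a:ℂ) ^ n * z₀ ^ (b ^ n))
      = ∑' n, F n := by
    rw [← Summable.tsum_sub hsz hsz₀]
    exact tsum_congr fun n => by simp only [hFdef]; ring
  have hsplit := Summable.sum_add_tsum_nat_add m hF
  set E : ℕ → ℂ := fun k => Complex.exp (((π * ((b:ℝ) ^ k * r)) : ℝ) * I) with hEdef
  clear_value E
  have hFk : ∀ k : ℕ, F (k + m) = -u * ((a:ℂ) ^ (k + m) * (1 + E k)) := by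
    intro k
    simp only [hFdef, hEdef]
    rw [hzpow k, hz₀pow k]
    ring
  have hTsummand : Summable (fun k : ℕ => (a:ℂ) ^ (k + m) * (1 + E k)) := by
    apply Summable.of_norm_bounded (g := fun k : ℕ => (2 * a ^ m) * a ^ k)
      ((summable_geometric_of_lt_one ha₀.le ha₁).mul_left _)
    intro k
    rw [norm_mul]
    have h1 : ‖(a:ℂ) ^ (k + m)‖ = a ^ (k + m) := by
      rw [norm_pow, Complex.norm_real, Real.norm_of_nonneg ha₀.le]
    have h2 : ‖1 + E k‖ ≤ 2 := by
      calc ‖1 + E k‖ ≤ ‖(1:ℂ)‖ + ‖E k‖ := norm_add_le _ _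
        _ = 2 := by
            rw [norm_one, hEdef, Complex.norm_exp_ofReal_mul_I]
            norm_num
    calc ‖(a:ℂ) ^ (k + m)‖ * ‖1 + E k‖ ≤ a ^ (k + m) * 2 := by
          rw [h1]; exact mul_le_mul_of_nonneg_left h2 (by positivity)
      _ = 2 * a ^ m * a ^ k := by rw [pow_add]; ring
  have hT : ∑' k : ℕ, F (k + m) = -u * ∑' k : ℕ, (a:ℂ) ^ (k + m) * (1 + E k) := by
    rw [← tsum_mul_left]
    exact tsum_congr hFk
  have hre : ∀ k : ℕ, ((a:ℂ) ^ (k + m) * (1 + E k)).re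
      = a ^ (k + m) * (1 + Real.cos (π * ((b:ℝ) ^ k * r))) := by
    intro k
    rw [show ((a:ℂ) ^ (k + m)) = ((a ^ (k + m) : ℝ) : ℂ) by push_cast; ring,
      Complex.re_ofReal_mul, Complex.add_re, Complex.one_re, hEdef,
      Complex.exp_ofReal_mul_I_re]
  have hre_nonneg : ∀ k : ℕ, 0 ≤ a ^ (k + m) * (1 + Real.cos (π * ((b:ℝ) ^ k * r))) := by
    intro k
    have := Real.neg_one_le_cos (π * ((b:ℝ) ^ k * r))
    have h2 : (0:ℝ) ≤ a ^ (k + m) := by positivity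
    nlinarith
  have hre_summable : Summable
      (fun k : ℕ => a ^ (k + m) * (1 + Real.cos (π * ((b:ℝ) ^ k * r)))) := by
    refine Summable.of_nonneg_of_le hre_nonneg (fun k => ?_)
      ((summable_geometric_of_lt_one ha₀.le ha₁).mul_left (2 * a ^ m))
    have h1 : 1 + Real.cos (π * ((b:ℝ) ^ k * r)) ≤ 2 := by
      linarith [Real.cos_le_one (π * ((b:ℝ) ^ k * r))]
    calc a ^ (k + m) * (1 + Real.cos (π * ((b:ℝ) ^ k * r)))
        ≤ a ^ (k + m) * 2 := mul_le_mul_of_nonneg_left h1 (by positivity)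
      _ = 2 * a ^ m * a ^ k := by rw [pow_add]; ring
  have hre_sum_ge : a ^ m ≤ (∑' k : ℕ, (a:ℂ) ^ (k + m) * (1 + E k)).re := by
    rw [Complex.re_tsum hTsummand, tsum_congr hre]
    have h0 : a ^ m ≤ a ^ (0 + m) * (1 + Real.cos (π * ((b:ℝ) ^ 0 * r))) := by
      have hrr := abs_le.mp hr
      have hcos : 0 ≤ Real.cos (π * r) := by
        apply Real.cos_nonneg_of_mem_Icc
        constructor <;> nlinarith [hrr.1, hrr.2]
      simp only [pow_zero, one_mul, zero_add]
      nlinarith [pow_pos ha₀ m]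
    exact h0.trans (Summable.le_tsum hre_summable 0 fun i _ => hre_nonneg i)
  have habsu : ‖-u‖ = 1 := by
    rw [norm_neg, hudef, norm_zpow]
    simp
  have hTlb : a ^ m ≤ ‖∑' k : ℕ, F (k + m)‖ := by
    rw [hT, norm_mul, habsu, one_mul]
    refine hre_sum_ge.trans ?_
    exact (le_abs_self _).trans (Complex.abs_re_le_norm _)
  -- head bound
  have hθn : ∀ n : ℕ, ‖z ^ (b ^ n) - z₀ ^ (b ^ n)‖ ≤ (b:ℝ) ^ n * Δ := by
    intro n
    rw [hzdef, ← hz₀e, exp_pow, exp_pow]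
    refine (expI_sub_expI_le _ _).trans_eq ?_
    rw [show ((b ^ n : ℕ) * θ : ℝ) - ((b ^ n : ℕ) * θ₀ : ℝ) = (b:ℝ) ^ n * Δ by
      rw [hθdef]; push_cast; ring]
    rw [_root_.abs_of_nonneg (by positivity)]
  have hH : ‖∑ i ∈ Finset.range m, F i‖ ≤ (3 * π / 2) * a ^ m / (a * b - 1) := by
    have hstep1 : ‖∑ i ∈ Finset.range m, F i‖
        ≤ ∑ i ∈ Finset.range m, (a * b) ^ i * Δ := by
      refine (norm_sum_le _ _).trans ?_
      apply Finset.sum_le_sum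
      intro i _
      simp only [hFdef]
      rw [norm_mul]
      have h1 : ‖(a:ℂ) ^ i‖ = a ^ i := by
        rw [norm_pow, Complex.norm_real, Real.norm_of_nonneg ha₀.le]
      rw [h1]
      calc a ^ i * ‖z ^ (b ^ i) - z₀ ^ (b ^ i)‖
          ≤ a ^ i * ((b:ℝ) ^ i * Δ) := by
            exact mul_le_mul_of_nonneg_left (hθn i) (by positivity)
        _ = (a * b) ^ i * Δ := by rw [mul_pow]; ring
    have hstep2 : ∑ i ∈ Finset.range m, (a * b) ^ i * Δ
        ≤ ((a * b) ^ m / (a * b - 1)) * Δ := by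
      rw [← Finset.sum_mul]
      apply mul_le_mul_of_nonneg_right _ hΔlb.le
      rw [geom_sum_eq (ne_of_gt hab1)]
      gcongr
      · linarith
    refine hstep1.trans (hstep2.trans ?_)
    calc ((a * b) ^ m / (a * b - 1)) * Δ
        ≤ ((a * b) ^ m / (a * b - 1)) * ((3 * π / 2) / (b:ℝ) ^ m) := by
          apply mul_le_mul_of_nonneg_left hΔub
          have h9 : (0:ℝ) < a * b - 1 := by linarith
          positivity
      _ = (3 * π / 2) * a ^ m / (a * b - 1) := by
          rw [mul_pow]
          have hbne : ((b:ℝ) ^ m) ≠ 0 := ne_of_gt hbmpos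
          have habne : a * b - 1 ≠ 0 := by
            have : (0:ℝ) < a * b - 1 := by linarith
            exact ne_of_gt this
          field_simp
  -- z ≠ z₀
  have hbm1 : (1:ℝ) ≤ (b:ℝ) ^ m := one_le_pow₀ hb1.le
  have hΔ2π : Δ < 2 * π := by
    have : (3 * π / 2) / (b:ℝ) ^ m ≤ 3 * π / 2 := by
      apply div_le_self (by positivity) hbm1
    nlinarith [hΔub]
  have hzz : z ≠ z₀ := by
    intro h
    rw [hzdef, ← hz₀e, Complex.exp_eq_exp_iff_exists_int] at h
    obtain ⟨n, hn⟩ := h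
    have him : θ = θ₀ + n * (2 * π) := by
      have := congrArg Complex.im hn
      simpa using this
    have hΔeq : Δ = n * (2 * π) := by rw [hθdef] at him; linarith
    have hn0 : (0:ℝ) < n := by nlinarith
    have hn1 : (1:ℝ) ≤ n := by exact_mod_cast Int.cast_le.mpr (by exact_mod_cast hn0)
    nlinarith
  have hchord : ‖z - z₀‖ ≤ Δ := by
    rw [hzdef, ← hz₀e]
    refine (expI_sub_expI_le θ θ₀).trans_eq ?_
    rw [hθdef, show θ₀ + Δ - θ₀ = Δ by ring, abs_of_pos hΔlb]
  have habs_zz : 0 < ‖z - z₀‖ := by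
    rw [norm_pos_iff]
    exact sub_ne_zero.mpr hzz
  -- final bounds
  have hδb : (3 * π / 2) / (b:ℝ) ^ m < δ := by
    rw [div_lt_iff₀ (by positivity : (0:ℝ) < 2 * δ)] at hbm
    rw [div_lt_iff₀ hbmpos]
    linarith
  have hMC : M * ((3 * π / 2) / (b:ℝ) ^ m) < C * a ^ m := by
    rw [div_lt_iff₀ hC, mul_pow] at habm
    rw [show M * ((3 * π / 2) / (b:ℝ) ^ m) = (M * (3 * π / 2)) / (b:ℝ) ^ m by ring,
      div_lt_iff₀ hbmpos]
    linarith
  have hfinal : C * a ^ m ≤ ‖(∑' n : ℕ, (a:ℂ) ^ n * z ^ (b ^ n))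
      - (∑' n : ℕ, (a:ℂ) ^ n * z₀ ^ (b ^ n))‖ := by
    rw [hgdiff, ← hsplit]
    have htri : ‖∑' k : ℕ, F (k + m)‖
        ≤ ‖(∑ i ∈ Finset.range m, F i) + ∑' k : ℕ, F (k + m)‖
          + ‖∑ i ∈ Finset.range m, F i‖ := by
      calc ‖∑' k : ℕ, F (k + m)‖
          = ‖((∑ i ∈ Finset.range m, F i) + ∑' k : ℕ, F (k + m))
            + (-(∑ i ∈ Finset.range m, F i))‖ := by congr 1; ring
        _ ≤ _ := by
            refine (norm_add_le _ _).trans_eq ?_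
            rw [norm_neg]
    have hC2 : C * a ^ m = a ^ m - (3 * π / 2) * a ^ m / (a * b - 1) := by
      rw [hCdef]
      field_simp
    rw [hC2]
    have := hTlb
    linarith [hH, htri]
  refine ⟨z, ?_, habs_zz, ?_, ?_⟩
  · rw [mem_sphere_zero_iff_norm, habsz]
  · calc ‖z - z₀‖ ≤ Δ := hchord
      _ ≤ (3 * π / 2) / (b:ℝ) ^ m := hΔub
      _ < δ := hδb
  · calc M * ‖z - z₀‖ ≤ M * ((3 * π / 2) / (b:ℝ) ^ m) := by
          apply mul_le_mul_of_nonneg_left (hchord.trans hΔub) hM.le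
      _ < C * a ^ m := hMC
      _ ≤ _ := hfinal

/-- The complexified Weierstrass function `g z = Σ aⁿ z^(bⁿ)`, for `0 < a < 1`, `b` an odd
positive integer and `a b > 1 + 3π/2`, is continuous on the closed unit disc, holomorphic on
the open unit disc, and has infinite difference quotients at every point of the unit circle
along the unit circle. -/
theorem weierstrass_function (a : ℝ) (ha₀ : 0 < a) (ha₁ : a < 1)
    (b : ℕ) (hb_odd : Odd b) (hb_pos : 0 < b)
    (hab : 1 + 3 * Real.pi / 2 < a * b) :
    let g : ℂ → ℂ := fun z => ∑' n : ℕ, (a : ℂ) ^ n * z ^ (b ^ n)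
    ContinuousOn g (Metric.closedBall 0 1) ∧
      DifferentiableOn ℂ g (Metric.ball 0 1) ∧
      ∀ z₀ ∈ Metric.sphere (0:ℂ) 1, HasInfDiffQuot g (Metric.sphere 0 1) z₀ := by
  intro g
  refine ⟨?_, ?_, ?_⟩
  · show ContinuousOn (fun z : ℂ => ∑' n : ℕ, (a : ℂ) ^ n * z ^ (b ^ n))
      (Metric.closedBall 0 1)
    apply continuousOn_tsum (u := fun n : ℕ => a ^ n)
      (fun n => (continuous_const.mul (continuous_pow _)).continuousOn)
      (summable_geometric_of_lt_one ha₀.le ha₁)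
    intro n z hz
    rw [Metric.mem_closedBall, dist_zero_right] at hz
    simp only [Pi.mul_apply]
    rw [norm_mul, norm_pow, norm_pow, Complex.norm_real, Real.norm_of_nonneg ha₀.le]
    calc a ^ n * ‖z‖ ^ b ^ n ≤ a ^ n * 1 ^ b ^ n := by gcongr
      _ = a ^ n := by simp
  · show DifferentiableOn ℂ (fun z : ℂ => ∑' n : ℕ, (a : ℂ) ^ n * z ^ (b ^ n))
      (Metric.ball 0 1)
    apply differentiableOn_tsum_of_summable_norm (u := fun n : ℕ => a ^ n)
      (summable_geometric_of_lt_one ha₀.le ha₁)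
      (fun n => (differentiable_const _ |>.mul (differentiable_pow _)).differentiableOn)
      Metric.isOpen_ball
    intro n z hz
    rw [Metric.mem_ball, dist_zero_right] at hz
    rw [norm_mul, norm_pow, norm_pow, Complex.norm_real, Real.norm_of_nonneg ha₀.le]
    calc a ^ n * ‖z‖ ^ b ^ n ≤ a ^ n * 1 ^ b ^ n := by gcongr
      _ = a ^ n := by simp
  · intro z₀ hz₀
    show HasInfDiffQuot (fun z : ℂ => ∑' n : ℕ, (a : ℂ) ^ n * z ^ (b ^ n))
      (Metric.sphere 0 1) z₀
    exact main_part a ha₀ ha₁ b hb_odd hb_pos hab z₀ hz₀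
end

section
/- Let A(D) be the disc algebra, the Banach space of continuous functions on the closed unit disc that are holomorphic on the open unit disc D = {z : |z| < 1}, with the supremum norm. Then the set of f ∈ A(D) having infinite difference quotients at every point z₀ of the unit circle 𝕋 = {z : |z| = 1} along 𝕋 is a dense Gδ subset of A(D). -/
namespace DiscAlgAux

lemma extendFn_apply {E : Set ℂ} (f : C(E, ℂ)) {z : ℂ} (h : z ∈ E) :
    extendFn E f z = f ⟨z, h⟩ := dif_pos h

lemma tube {X T : Type*} [TopologicalSpace X] [TopologicalSpace T] [CompactSpace T]
    {U : Set (X × T)} (hU : IsOpen U) : IsOpen {x : X | ∀ t, (x, t) ∈ U} := by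
  rw [← isClosed_compl_iff]
  have h : {x : X | ∀ t, (x, t) ∈ U}ᶜ = Prod.fst '' Uᶜ := by
    ext x
    simp only [Set.mem_compl_iff, Set.mem_setOf_eq, not_forall, Set.mem_image, Prod.exists]
    constructor
    · rintro ⟨t, ht⟩; exact ⟨x, t, ht, rfl⟩
    · rintro ⟨a, t, ht, rfl⟩; exact ⟨t, ht⟩
  rw [h]
  exact isClosedMap_fst_of_compactSpace _ hU.isClosed_compl

instance : CompactSpace (Metric.closedBall (0:ℂ) 1) :=
  isCompact_iff_compactSpace.mp (isCompact_closedBall 0 1)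

lemma key_construction (n m : ℕ) (f : C(Metric.closedBall (0:ℂ) 1, ℂ))
    (hf : DifferentiableOn ℂ (extendFn (Metric.closedBall 0 1) f) (Metric.ball 0 1))
    {ε : ℝ} (hε : 0 < ε) :
    ∃ q : C(Metric.closedBall (0:ℂ) 1, ℂ),
      DifferentiableOn ℂ (extendFn (Metric.closedBall 0 1) q) (Metric.ball 0 1) ∧
      dist q f < ε ∧
      ∀ z₀ ∈ Metric.sphere (0:ℂ) 1, ∃ z ∈ Metric.sphere (0:ℂ) 1,
        0 < ‖z - z₀‖ ∧ ‖z - z₀‖ < 1 / (m + 1) ∧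
          (n + 1) * ‖z - z₀‖ < ‖extendFn (Metric.closedBall 0 1) q z - extendFn (Metric.closedBall 0 1) q z₀‖ := by
  set c : ℝ := ε / 2 with hcdef
  have hc : 0 < c := by positivity
  -- uniform continuity of f
  have huc := CompactSpace.uniformContinuous_of_continuous f.continuous
  rw [Metric.uniformContinuous_iff] at huc
  obtain ⟨δ', hδ'pos, hδ'⟩ := huc (c / 2) (by positivity)
  -- choose N
  obtain ⟨N, hN⟩ := exists_nat_gt
    (max (max (2 * Real.pi / δ') (2 * Real.pi * (m + 1))) (max Real.pi ((n + 1) * (2 * Real.pi) / c)))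
  have hpi := Real.pi_pos
  have hNπ : Real.pi < N := lt_of_le_of_lt (le_max_of_le_right (le_max_left _ _)) hN
  have hNpos : (0:ℝ) < N := hpi.trans hNπ
  set θ : ℝ := Real.pi / N with hθdef
  have hθpos : 0 < θ := by positivity
  have hθ1 : θ ≤ 1 := by
    rw [hθdef, div_le_one hNpos]; exact hNπ.le
  have h2θδ' : 2 * θ < δ' := by
    have h1 : 2 * Real.pi / δ' < N := lt_of_le_of_lt (le_max_of_le_left (le_max_left _ _)) hN
    rw [div_lt_iff₀ hδ'pos] at h1
    rw [hθdef]
    rw [show 2 * (Real.pi / N) = 2 * Real.pi / N by ring, div_lt_iff₀ hNpos]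
    linarith
  have h2θm : 2 * θ < 1 / (m + 1) := by
    have h1 : 2 * Real.pi * (m + 1) < N := lt_of_le_of_lt (le_max_of_le_left (le_max_right _ _)) hN
    have hm1 : (0:ℝ) < (m:ℝ) + 1 := by positivity
    rw [hθdef, show 2 * (Real.pi / N) = 2 * Real.pi / N by ring, div_lt_div_iff₀ hNpos hm1]
    linarith
  have h2θn : ((n:ℝ) + 1) * (2 * θ) < c := by
    have h1 : (n + 1) * (2 * Real.pi) / c < N := lt_of_le_of_lt (le_max_of_le_right (le_max_right _ _)) hN
    rw [div_lt_iff₀ hc] at h1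
    rw [hθdef]
    rw [show ((n:ℝ) + 1) * (2 * (Real.pi / N)) = (n + 1) * (2 * Real.pi) / N by ring,
      div_lt_iff₀ hNpos]
    linarith
  -- the perturbed function
  set q : C(Metric.closedBall (0:ℂ) 1, ℂ) :=
    ⟨fun z => f z + (c : ℂ) * (z : ℂ) ^ N,
      f.continuous.add ((continuous_const.mul (continuous_subtype_val.pow N)))⟩ with hqdef
  have hqval : ∀ (w : ℂ) (hw : w ∈ Metric.closedBall (0:ℂ) 1),
      extendFn (Metric.closedBall 0 1) q w = f ⟨w, hw⟩ + (c : ℂ) * w ^ N := fun w hw => by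
    rw [extendFn_apply q hw]; rfl
  refine ⟨q, ?_, ?_, ?_⟩
  · -- differentiability
    have hd : DifferentiableOn ℂ
        (fun w => extendFn (Metric.closedBall 0 1) f w + (c : ℂ) * w ^ N) (Metric.ball 0 1) :=
      hf.add ((differentiable_const _ |>.mul (differentiable_pow N)).differentiableOn)
    refine hd.congr fun w hw => ?_
    have hwK : w ∈ Metric.closedBall (0:ℂ) 1 := Metric.ball_subset_closedBall hw
    rw [hqval w hwK, extendFn_apply f hwK]
  · -- distance
    rw [ContinuousMap.dist_lt_iff hε]
    intro x
    have hx1 : ‖(x:ℂ)‖ ≤ 1 := mem_closedBall_zero_iff.mp x.2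
    have h2 : dist (q x) (f x) = c * ‖(x:ℂ)‖ ^ N := by
      rw [dist_eq_norm]
      have h3 : q x - f x = (c : ℂ) * (x : ℂ) ^ N := by simp [hqdef]
      rw [h3, norm_mul, norm_pow, Complex.norm_real, Real.norm_eq_abs, abs_of_pos hc]
    rw [h2]
    calc c * ‖(x:ℂ)‖ ^ N ≤ c * 1 := by
          have := pow_le_one₀ (norm_nonneg _) hx1 (n := N)
          nlinarith
      _ < ε := by rw [hcdef]; linarith
  · -- main estimate
    intro z₀ hz₀
    have habs0 : ‖z₀‖ = 1 := by
      simpa [Complex.dist_eq] using hz₀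
    set u : ℂ := Complex.exp ((θ:ℝ) * Complex.I) with hu
    set z : ℂ := z₀ * u with hzdef
    have habsu : ‖u‖ = 1 := Complex.norm_exp_ofReal_mul_I θ
    have hzsphere : z ∈ Metric.sphere (0:ℂ) 1 := by
      simp [Metric.mem_sphere, Complex.dist_eq, hzdef, map_mul, habs0, habsu]
    have habsdiff : ‖z - z₀‖ = ‖u - 1‖ := by
      rw [show z - z₀ = z₀ * (u - 1) by rw [hzdef]; ring, norm_mul, habs0, one_mul]
    have habsθI : ‖(θ : ℂ) * Complex.I‖ = θ := by
      simp [abs_of_pos hθpos]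
    have hub : ‖u - 1‖ ≤ 2 * θ := by
      have h := Complex.norm_exp_sub_one_le (x := (θ : ℂ) * Complex.I) (by rw [habsθI]; exact hθ1)
      rwa [habsθI] at h
    have hdub : ‖z - z₀‖ ≤ 2 * θ := habsdiff ▸ hub
    have hupow : u ^ N = -1 := by
      rw [hu, ← Complex.exp_nat_mul]
      have hNC : (N:ℂ) ≠ 0 := by
        exact_mod_cast ne_of_gt hNpos
      have : (N : ℂ) * ((θ:ℝ) * Complex.I) = (Real.pi : ℂ) * Complex.I := by
        rw [hθdef]
        push_cast
        field_simp
      rw [this, Complex.exp_pi_mul_I]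
    have hzN : z ^ N = -z₀ ^ N := by rw [hzdef, mul_pow, hupow, mul_neg_one]
    have hz₀Nabs : ‖z₀ ^ N‖ = 1 := by rw [norm_pow, habs0, one_pow]
    have hzne : z ≠ z₀ := by
      intro h
      rw [h] at hzN
      have h0 : z₀ ^ N = 0 := by
        have : (2:ℂ) * z₀ ^ N = 0 := by linear_combination hzN
        simpa using this
      rw [h0] at hz₀Nabs; simp at hz₀Nabs
    have hpos : 0 < ‖z - z₀‖ := by
      exact norm_pos_iff.mpr (sub_ne_zero.mpr hzne)
    have hzK : z ∈ Metric.closedBall (0:ℂ) 1 := Metric.sphere_subset_closedBall hzsphere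
    have hz₀K : z₀ ∈ Metric.closedBall (0:ℂ) 1 := Metric.sphere_subset_closedBall hz₀
    have hfsmall : ‖f ⟨z, hzK⟩ - f ⟨z₀, hz₀K⟩‖ < c / 2 := by
      have hd : dist (⟨z, hzK⟩ : Metric.closedBall (0:ℂ) 1) ⟨z₀, hz₀K⟩ < δ' := by
        rw [Subtype.dist_eq, Complex.dist_eq]
        exact lt_of_le_of_lt hdub h2θδ'
      have h := hδ' hd
      rwa [Complex.dist_eq] at h
    refine ⟨z, hzsphere, hpos, lt_of_le_of_lt hdub h2θm, ?_⟩
    rw [hqval z hzK, hqval z₀ hz₀K]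
    have hdecomp : f ⟨z, hzK⟩ + (c:ℂ) * z ^ N - (f ⟨z₀, hz₀K⟩ + (c:ℂ) * z₀ ^ N)
        = (f ⟨z, hzK⟩ - f ⟨z₀, hz₀K⟩) + (c:ℂ) * (z ^ N - z₀ ^ N) := by ring
    rw [hdecomp]
    set a : ℂ := f ⟨z, hzK⟩ - f ⟨z₀, hz₀K⟩ with ha
    set b : ℂ := (c:ℂ) * (z ^ N - z₀ ^ N) with hb
    have habsb : ‖b‖ = 2 * c := by
      rw [hb, hzN, show (c:ℂ) * (-z₀ ^ N - z₀ ^ N) = (-2 * c) * z₀ ^ N by ring,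
        norm_mul, hz₀Nabs, mul_one]
      have : ‖(-2 : ℂ) * c‖ = 2 * c := by
        rw [norm_mul]
        simp [abs_of_pos hc]
      simpa using this
    have htri : ‖b‖ - ‖a‖ ≤ ‖a + b‖ := by
      have h1 := norm_add_le (a + b) (-a)
      have h2 : (a + b) + (-a) = b := by ring
      rw [h2] at h1
      have h3 : ‖-a‖ = ‖a‖ := by simp
      linarith
    calc ((n:ℝ) + 1) * ‖z - z₀‖ ≤ ((n:ℝ) + 1) * (2 * θ) := by
          apply mul_le_mul_of_nonneg_left hdub (by positivity)
      _ < c := h2θn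
      _ < 2 * c - ‖a‖ := by linarith [hfsmall, hc]
      _ = ‖b‖ - ‖a‖ := by rw [habsb]
      _ ≤ ‖a + b‖ := htri


/-- The closed unit disc. -/
abbrev Kc : Set ℂ := Metric.closedBall 0 1

/-- The disc algebra as a subset of `C(Kc, ℂ)`. -/
abbrev Ac : Set C(Kc, ℂ) := {f | DifferentiableOn ℂ (extendFn Kc f) (Metric.ball 0 1)}

/-- The generic set. -/
abbrev Sc : Set ↥Ac := {f | ∀ z₀ ∈ Metric.sphere (0:ℂ) 1,
  HasInfDiffQuot (extendFn Kc f.1) (Metric.sphere 0 1) z₀}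

/-- The open approximating sets. -/
def Gset (p : ℕ × ℕ) : Set ↥Ac :=
  {x | ∀ z₀ ∈ Metric.sphere (0:ℂ) 1, ∃ z ∈ Metric.sphere (0:ℂ) 1,
    0 < ‖z - z₀‖ ∧ ‖z - z₀‖ < 1 / ((p.2 : ℝ) + 1) ∧
      ((p.1 : ℝ) + 1) * ‖z - z₀‖ <
        ‖extendFn Kc x.1 z - extendFn Kc x.1 z₀‖}

lemma S_eq : Sc = ⋂ p : ℕ × ℕ, Gset p := by
  ext x
  simp only [Set.mem_iInter, Sc, Set.mem_setOf_eq, Gset]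
  constructor
  · intro hx p z₀ hz₀
    have hm : (0:ℝ) < 1 / ((p.2 : ℝ) + 1) := by positivity
    obtain ⟨z, hz, h1, h2, h3⟩ := hx z₀ hz₀ ((p.1 : ℝ) + 1) (by positivity) (1 / ((p.2 : ℝ) + 1)) hm
    exact ⟨z, hz, h1, h2, h3⟩
  · intro hx z₀ hz₀ M hM δ hδ
    obtain ⟨n, hn⟩ := exists_nat_ge M
    obtain ⟨m, hm⟩ := exists_nat_one_div_lt hδ
    obtain ⟨z, hz, h1, h2, h3⟩ := hx (n, m) z₀ hz₀
    refine ⟨z, hz, h1, h2.trans hm, lt_of_le_of_lt ?_ h3⟩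
    apply mul_le_mul_of_nonneg_right _ (norm_nonneg _)
    exact hn.trans (by linarith)

lemma Gopen (p : ℕ × ℕ) : IsOpen (Gset p) := by
  haveI : CompactSpace (Metric.sphere (0:ℂ) 1) :=
    isCompact_iff_compactSpace.mp (isCompact_sphere 0 1)
  have hU : IsOpen {q : ↥Ac × ↥(Metric.sphere (0:ℂ) 1) | ∃ t : ↥(Metric.sphere (0:ℂ) 1),
      0 < ‖(t:ℂ) - (q.2:ℂ)‖ ∧
      ‖(t:ℂ) - (q.2:ℂ)‖ < 1 / ((p.2 : ℝ) + 1) ∧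
      ((p.1 : ℝ) + 1) * ‖(t:ℂ) - (q.2:ℂ)‖ <
        ‖q.1.1 ⟨(t:ℂ), Metric.sphere_subset_closedBall t.2⟩ -
          q.1.1 ⟨(q.2:ℂ), Metric.sphere_subset_closedBall q.2.2⟩‖} := by
    rw [Set.setOf_exists]
    refine isOpen_iUnion fun t => ?_
    have hsnd : Continuous fun q : ↥Ac × ↥(Metric.sphere (0:ℂ) 1) => (q.2 : ℂ) :=
      continuous_subtype_val.comp continuous_snd
    have hc1 : Continuous fun q : ↥Ac × ↥(Metric.sphere (0:ℂ) 1) =>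
        ‖(t:ℂ) - (q.2:ℂ)‖ :=
      continuous_norm.comp (continuous_const.sub hsnd)
    have hf1 : Continuous fun q : ↥Ac × ↥(Metric.sphere (0:ℂ) 1) => q.1.1 :=
      continuous_subtype_val.comp continuous_fst
    have hx : Continuous fun q : ↥Ac × ↥(Metric.sphere (0:ℂ) 1) =>
        (⟨(q.2:ℂ), Metric.sphere_subset_closedBall q.2.2⟩ : Kc) :=
      hsnd.subtype_mk _
    have hev : Continuous fun q : ↥Ac × ↥(Metric.sphere (0:ℂ) 1) =>
        q.1.1 ⟨(q.2:ℂ), Metric.sphere_subset_closedBall q.2.2⟩ := hf1.eval hx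
    have hevt : Continuous fun q : ↥Ac × ↥(Metric.sphere (0:ℂ) 1) =>
        q.1.1 ⟨(t:ℂ), Metric.sphere_subset_closedBall t.2⟩ := hf1.eval_const _
    have h2 : Continuous fun q : ↥Ac × ↥(Metric.sphere (0:ℂ) 1) =>
        ‖q.1.1 ⟨(t:ℂ), Metric.sphere_subset_closedBall t.2⟩ -
          q.1.1 ⟨(q.2:ℂ), Metric.sphere_subset_closedBall q.2.2⟩‖ :=
      continuous_norm.comp (hevt.sub hev)
    simp only [Set.setOf_and]
    exact (isOpen_lt continuous_const hc1).inter
      ((isOpen_lt hc1 continuous_const).inter (isOpen_lt (continuous_const.mul hc1) h2))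
  suffices h : Gset p = {x : ↥Ac | ∀ t : ↥(Metric.sphere (0:ℂ) 1),
      ∃ z : ↥(Metric.sphere (0:ℂ) 1),
      0 < ‖(z:ℂ) - (t:ℂ)‖ ∧
      ‖(z:ℂ) - (t:ℂ)‖ < 1 / ((p.2 : ℝ) + 1) ∧
      ((p.1 : ℝ) + 1) * ‖(z:ℂ) - (t:ℂ)‖ <
        ‖x.1 ⟨(z:ℂ), Metric.sphere_subset_closedBall z.2⟩ -
          x.1 ⟨(t:ℂ), Metric.sphere_subset_closedBall t.2⟩‖} by
    rw [h]; exact tube hU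
  ext x
  simp only [Gset, Set.mem_setOf_eq]
  constructor
  · intro hx t
    obtain ⟨z, hzs, h1, h2, h3⟩ := hx t.1 t.2
    refine ⟨⟨z, hzs⟩, h1, h2, ?_⟩
    rwa [extendFn_apply _ (Metric.sphere_subset_closedBall hzs),
      extendFn_apply _ (Metric.sphere_subset_closedBall t.2)] at h3
  · intro hx z₀ hz₀
    obtain ⟨z, h1, h2, h3⟩ := hx ⟨z₀, hz₀⟩
    refine ⟨z, z.2, h1, h2, ?_⟩
    rwa [extendFn_apply _ (Metric.sphere_subset_closedBall z.2),
      extendFn_apply _ (Metric.sphere_subset_closedBall hz₀)]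

lemma Gdense (p : ℕ × ℕ) : Dense (Gset p) := by
  rw [Metric.dense_iff]
  intro x ε hε
  obtain ⟨q, hqA, hqd, hqG⟩ := key_construction p.1 p.2 x.1 x.2 hε
  refine ⟨⟨q, hqA⟩, ?_, ?_⟩
  · rw [Metric.mem_ball, Subtype.dist_eq]
    exact hqd
  · intro z₀ hz₀
    exact hqG z₀ hz₀

theorem main : Dense Sc ∧ IsGδ Sc := by
  have hAc : IsClosed Ac := by
    apply isClosed_of_closure_subset
    intro f hf
    haveI hne : (nhdsWithin f Ac).NeBot := mem_closure_iff_nhdsWithin_neBot.mp hf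
    have htu : TendstoUniformlyOn (fun (g : C(Kc, ℂ)) z => extendFn Kc g z)
        (extendFn Kc f) (nhdsWithin f Ac) (Metric.ball 0 1) := by
      rw [Metric.tendstoUniformlyOn_iff]
      intro ε hε
      filter_upwards [nhdsWithin_le_nhds (Metric.ball_mem_nhds f hε)] with g hg z hz
      have hzK : z ∈ Kc := Metric.ball_subset_closedBall hz
      rw [extendFn_apply f hzK, extendFn_apply g hzK]
      calc dist (f ⟨z, hzK⟩) (g ⟨z, hzK⟩) ≤ dist f g := ContinuousMap.dist_apply_le_dist _
        _ < ε := by rw [dist_comm]; exact Metric.mem_ball.mp hg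
    exact htu.tendstoLocallyUniformlyOn.differentiableOn
      (eventually_mem_nhdsWithin.mono fun g hg => hg) Metric.isOpen_ball
  haveI : CompleteSpace ↥Ac := hAc.completeSpace_coe
  constructor
  · rw [S_eq]
    exact dense_iInter_of_isOpen Gopen Gdense
  · rw [S_eq]
    exact IsGδ.iInter fun p => (Gopen p).isGδ

end DiscAlgAux

open scoped Classical in
/-- In the disc algebra `A(D)` (continuous functions on the closed unit disc, holomorphic on
the open unit disc, with the supremum norm — on the compact closed disc the compact-open
topology is the supremum-norm topology), the set of functions having infinite difference
quotients at every point of the unit circle along the unit circle is a dense `Gδ` set. -/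
theorem discAlgebra_genericity :
    let K : Set ℂ := Metric.closedBall 0 1
    let A : Set C(K, ℂ) := {f | DifferentiableOn ℂ (extendFn K f) (Metric.ball 0 1)}
    let S : Set ↥A := {f | ∀ z₀ ∈ Metric.sphere (0:ℂ) 1,
      HasInfDiffQuot (extendFn K f.1) (Metric.sphere 0 1) z₀}
    Dense S ∧ IsGδ S := by
  exact DiscAlgAux.main
end

section
/- Let H = {z ∈ ℂ : Re z > 0} be the open right half-plane and A(cl(H)) the Fréchet space of continuous functions on cl(H) = {z : Re z ≥ 0} that are holomorphic on H, endowed with the topology of uniform convergence on compact subsets of cl(H). Then the set of f ∈ A(cl(H)) having infinite difference quotients at every point z₀ of the imaginary axis iℝ along iℝ is a dense Gδ subset of A(cl(H)). -/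
namespace HalfPlaneAux

open Complex Set Filter Topology Metric
open scoped Uniformity

/-- The closed right half plane. -/
def Ecl : Set ℂ := {z | 0 ≤ z.re}

lemma isClosed_Ecl : IsClosed Ecl := isClosed_le continuous_const Complex.continuous_re

instance : LocallyCompactSpace ↥Ecl := isClosed_Ecl.locallyCompactSpace
instance : SigmaCompactSpace ↥Ecl := isClosed_Ecl.sigmaCompactSpace

lemma axis_mem (t : ℝ) : (t : ℂ) * Complex.I ∈ Ecl := by simp [Ecl]

/-- The point `t·I` of the imaginary axis, as an element of the closed half plane. -/
noncomputable def pt (t : ℝ) : ↥Ecl := ⟨(t : ℂ) * Complex.I, axis_mem t⟩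

lemma continuous_pt : Continuous pt := by
  apply Continuous.subtype_mk
  exact (Complex.continuous_ofReal.mul continuous_const)

lemma extendFn_eq (f : C(↥Ecl, ℂ)) {z : ℂ} (h : z ∈ Ecl) :
    extendFn Ecl f z = f ⟨z, h⟩ := dif_pos h

lemma extendFn_pt (f : C(↥Ecl, ℂ)) (t : ℝ) :
    extendFn Ecl f ((t : ℂ) * Complex.I) = f (pt t) := extendFn_eq f (axis_mem t)

lemma abs_axis_sub (s t : ℝ) :
    ‖(s : ℂ) * Complex.I - (t : ℂ) * Complex.I‖ = |s - t| := by
  rw [← sub_mul, ← Complex.ofReal_sub, norm_mul, Complex.norm_I, mul_one, Complex.norm_real, Real.norm_eq_abs]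

/-- The open right half plane. -/
def Uo : Set ℂ := {z | 0 < z.re}

lemma isOpen_Uo : IsOpen Uo := isOpen_lt continuous_const Complex.continuous_re

lemma Uo_subset : Uo ⊆ Ecl := fun z hz => show (0:ℝ) ≤ z.re from le_of_lt hz

/-- The set of `f` which are holomorphic in the interior. -/
def A' : Set C(↥Ecl, ℂ) := {f | DifferentiableOn ℂ (extendFn Ecl f) Uo}

/-- The `n`-th openness/density condition. -/
def QQ (n : ℕ) (f : C(↥Ecl, ℂ)) : Prop :=
  ∀ t : ℝ, |t| ≤ (n : ℝ) + 1 → ∃ s : ℝ,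
    0 < |s - t| ∧ |s - t| < 1 / ((n : ℝ) + 1) ∧
      ((n : ℝ) + 1) * |s - t| < dist (f (pt s)) (f (pt t))

lemma mem_S_iff (f : C(↥Ecl, ℂ)) :
    (∀ z₀ ∈ {z : ℂ | z.re = 0},
      HasInfDiffQuot (extendFn Ecl f) {z : ℂ | z.re = 0} z₀) ↔ ∀ n, QQ n f := by
  constructor
  · intro h n t ht
    have hz₀ : ((t : ℂ) * Complex.I) ∈ {z : ℂ | z.re = 0} := by simp
    have hn1 : (0:ℝ) < (n : ℝ) + 1 := by positivity
    obtain ⟨z, hzmem, hpos, hlt, hM⟩ :=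
      h _ hz₀ ((n : ℝ) + 1) hn1 (1 / ((n : ℝ) + 1)) (by positivity)
    have hz : z = (z.im : ℂ) * Complex.I := by
      apply Complex.ext <;> simp [hzmem.out]
    refine ⟨z.im, ?_, ?_, ?_⟩
    · rw [← abs_axis_sub, ← hz]; exact hpos
    · rw [← abs_axis_sub, ← hz]; exact hlt
    · rw [← abs_axis_sub, ← hz]
      have h1 : extendFn Ecl f z = f (pt z.im) := by
        nth_rewrite 1 [hz]; exact extendFn_pt f z.im
      have h2 : extendFn Ecl f ((t:ℂ) * Complex.I) = f (pt t) := extendFn_pt f t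
      rw [Complex.dist_eq, ← h1, ← h2]
      exact hM
  · intro h z₀ hz₀ M hM δ hδ
    set t := z₀.im with htdef
    have hz : z₀ = (t : ℂ) * Complex.I := by
      apply Complex.ext <;> simp [hz₀.out, htdef]
    set n : ℕ := ⌈max M (max |t| (1/δ))⌉₊ with hn
    have hMn : M ≤ (n : ℝ) + 1 :=
      le_trans (le_trans (le_max_left _ _) (Nat.le_ceil _)) (by linarith)
    have htn : |t| ≤ (n : ℝ) + 1 :=
      le_trans (le_trans (le_max_of_le_right (le_max_left _ _)) (Nat.le_ceil _)) (by linarith)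
    have hδn : 1 / ((n : ℝ) + 1) ≤ δ := by
      rw [div_le_iff₀ (by positivity)]
      have h1 : 1/δ ≤ (n : ℝ) + 1 :=
        le_trans (le_trans (le_max_of_le_right (le_max_right _ _)) (Nat.le_ceil _)) (by linarith)
      rw [div_le_iff₀ hδ] at h1
      calc (1:ℝ) ≤ ((n:ℝ)+1) * δ := h1
        _ = δ * ((n:ℝ)+1) := mul_comm _ _
    obtain ⟨s, hs0, hs1, hs2⟩ := h n t htn
    refine ⟨(s : ℂ) * Complex.I, by simp, ?_, ?_, ?_⟩
    · rw [hz, abs_axis_sub]; exact hs0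
    · rw [hz, abs_axis_sub]; exact lt_of_lt_of_le hs1 hδn
    · rw [hz, abs_axis_sub]
      calc M * |s - t| ≤ ((n:ℝ)+1) * |s - t| :=
            mul_le_mul_of_nonneg_right hMn (abs_nonneg _)
        _ < dist (f (pt s)) (f (pt t)) := hs2
        _ = ‖extendFn Ecl f ((s:ℂ)*Complex.I) - extendFn Ecl f ((t:ℂ)*Complex.I)‖ := by
            rw [extendFn_pt, extendFn_pt, Complex.dist_eq]

lemma isOpen_QQ (n : ℕ) : IsOpen {f : C(↥Ecl, ℂ) | QQ n f} := by
  rw [isOpen_iff_mem_nhds]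
  intro f hf
  have hn1 : (0:ℝ) < (n : ℝ) + 1 := by positivity
  set K : Set ℝ := Icc (-(n : ℝ) - 1) ((n : ℝ) + 1) with hK
  have habs : ∀ t : ℝ, t ∈ K ↔ |t| ≤ (n : ℝ) + 1 := by
    intro t; rw [abs_le, hK, mem_Icc]; constructor <;> intro h <;> exact ⟨by linarith [h.1], h.2⟩
  have hch : ∀ t : K, ∃ s : ℝ,
      0 < |s - (t:ℝ)| ∧ |s - (t:ℝ)| < 1 / ((n : ℝ) + 1) ∧
        ((n : ℝ) + 1) * |s - (t:ℝ)| < dist (f (pt s)) (f (pt (t:ℝ))) :=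
    fun t => hf (t : ℝ) ((habs _).1 t.2)
  choose s hs0 hs1 hs2 using hch
  set ε : K → ℝ := fun t =>
    (dist (f (pt (s t))) (f (pt (t:ℝ))) - ((n : ℝ) + 1) * |s t - (t:ℝ)|) / 2 with hε
  have hεpos : ∀ t, 0 < ε t := fun t => by
    have := hs2 t; simp only [hε]; linarith
  set V : K → Set ℝ := fun t =>
    {t' | 0 < |s t - t'| ∧ |s t - t'| < 1 / ((n : ℝ) + 1) ∧
      ((n : ℝ) + 1) * |s t - t'| + ε t < dist (f (pt (s t))) (f (pt t'))} with hV
  have hVopen : ∀ t, IsOpen (V t) := by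
    intro t
    apply IsOpen.inter
    · exact isOpen_lt continuous_const (continuous_const.sub continuous_id).abs
    apply IsOpen.inter
    · exact isOpen_lt (continuous_const.sub continuous_id).abs continuous_const
    · exact isOpen_lt
        ((continuous_const.mul (continuous_const.sub continuous_id).abs).add continuous_const)
        (continuous_const.dist ((map_continuous f).comp continuous_pt))
  have hVmem : ∀ t : K, (t : ℝ) ∈ V t := by
    intro t
    refine ⟨hs0 t, hs1 t, ?_⟩
    have := hs2 t
    simp only [hε]; linarith
  have hcover : K ⊆ ⋃ t : K, V t := fun x hx =>
    mem_iUnion.2 ⟨⟨x, hx⟩, hVmem ⟨x, hx⟩⟩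
  obtain ⟨T, hT⟩ := isCompact_Icc.elim_finite_subcover V hVopen hcover
  have hTne : T.Nonempty := by
    by_contra hemp
    rw [Finset.not_nonempty_iff_eq_empty] at hemp
    have h0 : (0:ℝ) ∈ K := by rw [habs]; simp; linarith
    have := hT h0
    simp [hemp] at this
  set ε₀ : ℝ := T.inf' hTne ε with hε₀
  have hε₀pos : 0 < ε₀ := by
    rw [hε₀, Finset.lt_inf'_iff]
    exact fun t _ => hεpos t
  -- the compact set of points where closeness matters
  set C : Set ↥Ecl := pt '' Icc (-(n : ℝ) - 2) ((n : ℝ) + 2) with hC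
  have hCcomp : IsCompact C := isCompact_Icc.image continuous_pt
  set u : Set (ℂ × ℂ) := {p | dist p.1 p.2 < ε₀ / 2} with hu
  have humem : u ∈ 𝓤 ℂ := dist_mem_uniformity (by positivity)
  set W : Set (C(↥Ecl, ℂ) × C(↥Ecl, ℂ)) := {fg | ∀ x ∈ C, (fg.1 x, fg.2 x) ∈ u} with hW
  have hWmem : W ∈ 𝓤 C(↥Ecl, ℂ) :=
    ContinuousMap.hasBasis_compactConvergenceUniformity.mem_of_mem (i := (C, u)) ⟨hCcomp, humem⟩
  refine mem_of_superset (UniformSpace.ball_mem_nhds f hWmem) ?_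
  intro g hg
  -- hg : ∀ x ∈ C, dist (f x) (g x) < ε₀/2
  intro t' ht'
  have ht'K : t' ∈ K := (habs t').2 ht'
  have hmem := hT ht'K
  rw [Set.mem_iUnion₂] at hmem
  obtain ⟨t, htT, ht'V⟩ := hmem
  obtain ⟨h1, h2, h3⟩ := ht'V
  refine ⟨s t, h1, h2, ?_⟩
  have hεt : ε₀ ≤ ε t := Finset.inf'_le _ htT
  have hsC : pt (s t) ∈ C := by
    have h4 := hs1 t
    have h5 : |(t : ℝ)| ≤ (n : ℝ) + 1 := (habs _).1 t.2
    have h6 : 1 / ((n:ℝ)+1) ≤ 1 := by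
      rw [div_le_one hn1]; linarith
    have h7 := abs_sub_abs_le_abs_sub (s t) (t : ℝ)
    have h8 : |s t| ≤ (n : ℝ) + 2 := by linarith
    obtain ⟨ha, hb⟩ := abs_le.1 h8
    refine mem_image_of_mem _ ?_
    rw [mem_Icc]
    exact ⟨by linarith, by linarith⟩
  have ht'C : pt t' ∈ C := by
    obtain ⟨ha, hb⟩ := abs_le.1 ht'
    refine mem_image_of_mem _ ?_
    rw [mem_Icc]
    exact ⟨by linarith, by linarith⟩
  have hb1 : dist (f (pt (s t))) (g (pt (s t))) < ε₀ / 2 := hg _ hsC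
  have hb2 : dist (f (pt t')) (g (pt t')) < ε₀ / 2 := hg _ ht'C
  have htri : dist (f (pt (s t))) (f (pt t')) ≤
      dist (f (pt (s t))) (g (pt (s t))) + dist (g (pt (s t))) (g (pt t'))
        + dist (g (pt t')) (f (pt t')) := dist_triangle4 _ _ _ _
  rw [dist_comm (g (pt t'))] at htri
  linarith


lemma isClosed_A' : IsClosed A' := by
  rw [← closure_subset_iff_isClosed]
  intro f hf
  have hl : (𝓝 f ⊓ 𝓟 A').NeBot := mem_closure_iff_clusterPt.1 hf
  set l : Filter C(↥Ecl, ℂ) := 𝓝 f ⊓ 𝓟 A' with hldef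
  have htendsto : Tendsto (id : C(↥Ecl, ℂ) → C(↥Ecl, ℂ)) l (𝓝 f) :=
    tendsto_id.mono_left inf_le_left
  rw [ContinuousMap.tendsto_iff_forall_isCompact_tendstoUniformlyOn] at htendsto
  have hloc : TendstoLocallyUniformlyOn (fun (g : C(↥Ecl, ℂ)) => extendFn Ecl g)
      (extendFn Ecl f) l Uo := by
    rw [tendstoLocallyUniformlyOn_iff_forall_isCompact isOpen_Uo]
    intro K hKU hK
    have hK' : IsCompact (Subtype.val ⁻¹' K : Set ↥Ecl) :=
      (isClosed_Ecl.isClosedEmbedding_subtypeVal).isCompact_preimage hK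
    have h1 := htendsto _ hK'
    intro u hu
    filter_upwards [h1 u hu] with g hg z hz
    have hzE : z ∈ Ecl := Uo_subset (hKU hz)
    have := hg ⟨z, hzE⟩ hz
    rwa [extendFn_eq f hzE, extendFn_eq g hzE]
  have hev : ∀ᶠ (g : C(↥Ecl, ℂ)) in l, DifferentiableOn ℂ (extendFn Ecl g) Uo := by
    have : A' ∈ l := mem_inf_of_right (mem_principal_self _)
    filter_upwards [this] with g hg
    exact hg
  exact hloc.differentiableOn hev isOpen_Uo

lemma baire_A' : BaireSpace ↥A' := by
  haveI : CompleteSpace ↥A' := isClosed_A'.completeSpace_coe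
  haveI : IsCountablyGenerated (𝓤 ↥A') := by
    rw [uniformity_subtype]; infer_instance
  letI : PseudoMetricSpace ↥A' := UniformSpace.pseudoMetricSpace ↥A'
  exact BaireSpace.of_completelyPseudoMetrizable

lemma dense_aux (n : ℕ) (f : C(↥Ecl, ℂ)) (hf : f ∈ A') {U : Set C(↥Ecl, ℂ)}
    (hU : U ∈ 𝓝 f) : ∃ g : C(↥Ecl, ℂ), g ∈ U ∧ g ∈ A' ∧ QQ n g := by
  have hn1 : (0:ℝ) < (n : ℝ) + 1 := by positivity
  -- extract a basic neighborhood
  rw [nhds_eq_comap_uniformity, (ContinuousMap.hasBasis_compactConvergenceUniformity.comap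
    (Prod.mk f)).mem_iff] at hU
  obtain ⟨⟨K, u⟩, ⟨hK, hu⟩, hsub⟩ := hU
  obtain ⟨r, hr, hru⟩ := Metric.mem_uniformity_dist.1 hu
  set ε : ℝ := r / 2 with hεdef
  have hε : 0 < ε := by positivity
  -- uniform continuity of the boundary values on a compact interval
  set ψ : ℝ → ℂ := fun t => f (pt t) with hψ
  have hψc : Continuous ψ := (map_continuous f).comp continuous_pt
  have huc : UniformContinuousOn ψ (Icc (-(n:ℝ) - 2) ((n:ℝ) + 2)) :=
    isCompact_Icc.uniformContinuousOn_of_continuous hψc.continuousOn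
  obtain ⟨d, hd, hdd⟩ := (uniformContinuousOn_iff).1 huc (ε / 2) (by positivity)
  -- choose the wiggle scale
  set c : ℝ := min (d / 2) (min (1 / (2 * ((n:ℝ) + 1))) (ε / (2 * ((n:ℝ) + 1)))) with hcdef
  have hc : 0 < c := by
    apply lt_min (by positivity) (lt_min (by positivity) (by positivity))
  have hcd : c < d := lt_of_le_of_lt (min_le_left _ _) (by linarith)
  have hcn : c < 1 / ((n:ℝ) + 1) := by
    have h1 : c ≤ 1 / (2 * ((n:ℝ) + 1)) := le_trans (min_le_right _ _) (min_le_left _ _)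
    have h2 : 1 / (2 * ((n:ℝ) + 1)) < 1 / ((n:ℝ) + 1) := by
      apply div_lt_div_of_pos_left one_pos hn1
      linarith
    linarith
  have hcε : ((n:ℝ) + 1) * c ≤ ε / 2 := by
    have h1 : c ≤ ε / (2 * ((n:ℝ) + 1)) := le_trans (min_le_right _ _) (min_le_right _ _)
    rw [le_div_iff₀ (by positivity)] at h1
    nlinarith
  set lam : ℝ := Real.pi / c with hlam
  have hlampos : 0 < lam := div_pos Real.pi_pos hc
  have hlamc : lam * c = Real.pi := div_mul_cancel₀ _ (ne_of_gt hc)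
  -- the perturbed function
  set g : C(↥Ecl, ℂ) := ⟨fun z => f z + (ε : ℂ) * Complex.exp (-(lam : ℂ) * (z : ℂ)),
    (map_continuous f).add (continuous_const.mul
      ((Complex.continuous_exp.comp (continuous_const.mul continuous_subtype_val))))⟩ with hg
  have hgapp : ∀ z : ↥Ecl, g z = f z + (ε : ℂ) * Complex.exp (-(lam : ℂ) * (z : ℂ)) :=
    fun z => rfl
  have habs_exp : ∀ z : ↥Ecl, ‖Complex.exp (-(lam : ℂ) * (z : ℂ))‖ ≤ 1 := by
    intro z
    rw [Complex.norm_exp]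
    apply Real.exp_le_one_iff.2
    have hz : (0:ℝ) ≤ (z : ℂ).re := z.2
    have : (-(lam : ℂ) * (z : ℂ)).re = -lam * (z : ℂ).re := by
      simp [Complex.mul_re]
    rw [this]
    nlinarith
  have hdistfg : ∀ z : ↥Ecl, dist (f z) (g z) ≤ ε := by
    intro z
    rw [hgapp, dist_self_add_right]
    calc ‖(ε : ℂ) * Complex.exp (-(lam : ℂ) * (z : ℂ))‖
        = ε * ‖Complex.exp (-(lam : ℂ) * (z : ℂ))‖ := by
          rw [norm_mul, Complex.norm_real, Real.norm_of_nonneg hε.le]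
      _ ≤ ε * 1 := by
          exact mul_le_mul_of_nonneg_left (habs_exp z) hε.le
      _ = ε := mul_one _
  refine ⟨g, ?_, ?_, ?_⟩
  · apply hsub
    intro x hx
    exact hru (lt_of_le_of_lt (hdistfg x) (by rw [hεdef]; linarith))
  · -- g ∈ A'
    intro z hz
    apply DifferentiableAt.differentiableWithinAt
    have hzE : Uo ∈ 𝓝 z := isOpen_Uo.mem_nhds hz
    have heq : extendFn Ecl g =ᶠ[𝓝 z]
        fun w => extendFn Ecl f w + (ε : ℂ) * Complex.exp (-(lam : ℂ) * w) := by
      filter_upwards [hzE] with w hw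
      have hwE : w ∈ Ecl := Uo_subset hw
      rw [extendFn_eq g hwE, extendFn_eq f hwE, hgapp]
    have hdiff : DifferentiableAt ℂ
        (fun w => extendFn Ecl f w + (ε : ℂ) * Complex.exp (-(lam : ℂ) * w)) z := by
      apply DifferentiableAt.add
      · exact hf.differentiableAt hzE
      · apply DifferentiableAt.const_mul
        have hde : Differentiable ℂ fun w : ℂ => Complex.exp (-(lam : ℂ) * w) :=
          Complex.differentiable_exp.comp (differentiable_id.const_mul _)
        exact hde.differentiableAt
    exact hdiff.congr_of_eventuallyEq heq
  · -- QQ n g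
    intro t ht
    refine ⟨t + c, ?_, ?_, ?_⟩
    · rw [add_sub_cancel_left, abs_of_pos hc]; exact hc
    · rw [add_sub_cancel_left, abs_of_pos hc]; exact hcn
    rw [add_sub_cancel_left, abs_of_pos hc]
    -- exponential flips sign
    have hflip : Complex.exp (-(lam : ℂ) * ((((t + c) : ℝ) : ℂ) * Complex.I))
        = - Complex.exp (-(lam : ℂ) * (((t : ℝ) : ℂ) * Complex.I)) := by
      have harg : -(lam : ℂ) * ((((t + c) : ℝ) : ℂ) * Complex.I)
          = -(lam : ℂ) * (((t : ℝ) : ℂ) * Complex.I) + (Real.pi : ℂ) * Complex.I * (-1) := by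
        push_cast
        have : (lam : ℂ) * (c : ℂ) = (Real.pi : ℂ) := by
          rw [← Complex.ofReal_mul, hlamc]
        ring_nf
        rw [← this]
        ring
      rw [harg, Complex.exp_add]
      have : Complex.exp ((Real.pi : ℂ) * Complex.I * (-1)) = -1 := by
        rw [show (Real.pi : ℂ) * Complex.I * (-1) = -((Real.pi : ℂ) * Complex.I) by ring,
          Complex.exp_neg, Complex.exp_pi_mul_I]
        norm_num
      rw [this]
      ring
    have habs1 : ‖Complex.exp (-(lam : ℂ) * (((t : ℝ) : ℂ) * Complex.I))‖ = 1 := by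
      rw [Complex.norm_exp]
      have : (-(lam : ℂ) * (((t : ℝ) : ℂ) * Complex.I)).re = 0 := by
        simp [Complex.mul_re]
      rw [this, Real.exp_zero]
    -- distance of f-values is small
    have htmem : t ∈ Icc (-(n:ℝ) - 2) ((n:ℝ) + 2) := by
      obtain ⟨ha, hb⟩ := abs_le.1 ht
      rw [mem_Icc]; exact ⟨by linarith, by linarith⟩
    have htcmem : t + c ∈ Icc (-(n:ℝ) - 2) ((n:ℝ) + 2) := by
      obtain ⟨ha, hb⟩ := abs_le.1 ht
      have h1 : c ≤ 1 := by
        have := hcn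
        have h6 : 1 / ((n:ℝ)+1) ≤ 1 := by rw [div_le_one hn1]; linarith
        linarith
      rw [mem_Icc]; exact ⟨by linarith, by linarith⟩
    have hfsmall : dist (ψ (t + c)) (ψ t) < ε / 2 := by
      apply hdd _ htcmem _ htmem
      rw [show dist (t + c) t = |c| by rw [Real.dist_eq]; ring_nf]
      rw [abs_of_pos hc]; exact hcd
    -- final computation
    have hgdiff : g (pt (t + c)) - g (pt t)
        = (ψ (t + c) - ψ t) - 2 * ((ε:ℂ) * Complex.exp (-(lam : ℂ) * (((t : ℝ) : ℂ) * Complex.I))) := by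
      rw [hgapp, hgapp]
      show (ψ (t+c) + (ε:ℂ) * Complex.exp (-(lam:ℂ) * ((((t+c):ℝ):ℂ) * Complex.I)))
        - (ψ t + (ε:ℂ) * Complex.exp (-(lam:ℂ) * (((t:ℝ):ℂ) * Complex.I))) = _
      rw [hflip]
      ring
    have hlower : 2 * ε - dist (ψ (t + c)) (ψ t) ≤ dist (g (pt (t + c))) (g (pt t)) := by
      rw [Complex.dist_eq, Complex.dist_eq, hgdiff]
      have h1 : ‖2 * ((ε:ℂ) * Complex.exp (-(lam : ℂ) * (((t : ℝ) : ℂ) * Complex.I)))‖ = 2 * ε := by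
        rw [norm_mul, norm_mul, habs1, mul_one, Complex.norm_real, Real.norm_eq_abs,
          _root_.abs_of_nonneg hε.le, Complex.norm_two]
      calc 2 * ε - ‖ψ (t+c) - ψ t‖
          = ‖2 * ((ε:ℂ) * Complex.exp (-(lam : ℂ) * (((t : ℝ) : ℂ) * Complex.I)))‖
            - ‖ψ (t+c) - ψ t‖ := by rw [h1]
        _ ≤ ‖(ψ (t + c) - ψ t) - 2 * ((ε:ℂ) * Complex.exp (-(lam : ℂ) * (((t : ℝ) : ℂ) * Complex.I)))‖ := by
            exact (norm_sub_norm_le _ _).trans_eq (norm_sub_rev _ _)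
    have hfinal : ((n:ℝ) + 1) * c < dist (g (pt (t + c))) (g (pt t)) := by
      have hds : dist (f (pt (t+c))) (f (pt t)) = dist (ψ (t+c)) (ψ t) := rfl
      linarith [hlower, hfsmall, hcε]
    exact hfinal

end HalfPlaneAux

open scoped Uniformity in
/-- In the Fréchet space `A(cl H)` of continuous functions on the closed right half-plane
`{Re z ≥ 0}` that are holomorphic on the open right half-plane `{Re z > 0}`, endowed with the
topology of uniform convergence on compact subsets (the compact-open topology), the set of
functions having infinite difference quotients at every point of the imaginary axis along the
imaginary axis is a dense `Gδ` set. -/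
theorem halfPlane_genericity :
    let E : Set ℂ := {z | 0 ≤ z.re}
    let A : Set C(E, ℂ) := {f | DifferentiableOn ℂ (extendFn E f) {z | 0 < z.re}}
    let S : Set ↥A := {f | ∀ z₀ ∈ {z : ℂ | z.re = 0},
      HasInfDiffQuot (extendFn E f.1) {z : ℂ | z.re = 0} z₀}
    Dense S ∧ IsGδ S := by
  intro E A S
  haveI : BaireSpace ↥A := HalfPlaneAux.baire_A'
  haveI : Filter.IsCountablyGenerated (𝓤 C(↥E, ℂ)) :=
    (inferInstance : Filter.IsCountablyGenerated (𝓤 C(↥HalfPlaneAux.Ecl, ℂ)))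
  haveI : Filter.IsCountablyGenerated (𝓤 ↥A) := by
    rw [uniformity_subtype]; infer_instance
  have hmem : ∀ f : ↥A, f ∈ S ↔ ∀ n, HalfPlaneAux.QQ n f.1 :=
    fun f => HalfPlaneAux.mem_S_iff f.1
  set G : ℕ → Set ↥A := fun n => {f : ↥A | HalfPlaneAux.QQ n f.1} with hG
  have hS : S = ⋂ n, G n := by
    ext f
    simp only [Set.mem_iInter, hG, Set.mem_setOf_eq]
    exact hmem f
  have hopen : ∀ n, IsOpen (G n) :=
    fun n => (HalfPlaneAux.isOpen_QQ n).preimage continuous_subtype_val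
  have hdense : ∀ n, Dense (G n) := by
    intro n x
    rw [mem_closure_iff_nhds]
    intro N hN
    rw [mem_nhds_subtype] at hN
    obtain ⟨u, hu, husub⟩ := hN
    obtain ⟨g, hgu, hgA, hgQ⟩ := HalfPlaneAux.dense_aux n x.1 x.2 hu
    exact ⟨⟨g, hgA⟩, husub hgu, hgQ⟩
  constructor
  · rw [hS]; exact dense_iInter_of_isOpen hopen hdense
  · rw [hS]; exact IsGδ.iInter fun n => (hopen n).isGδ
end

section
/- Let U ⊆ ℂ be open, let φ : U → ℂ be holomorphic and injective, and let J ⊆ U be a compact set. Let f : ℂ → ℂ have infinite difference quotients at every point of J along J. Define h on φ(J) by h(φ(z)) = f(z) for z ∈ J (well-defined since φ is injective). Then h has infinite difference quotients at every point of φ(J) along φ(J). -/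
/-- Let `φ` be holomorphic and injective on an open set `U`, let `J ⊆ U` be compact, and let
`f` have infinite difference quotients at every point of `J` along `J`.  If `h` satisfies
`h (φ z) = f z` for `z ∈ J` (a well-posed definition of `h` on `φ '' J` since `φ` is
injective), then `h` has infinite difference quotients at every point of `φ '' J` along
`φ '' J`. -/
theorem transfer_by_conformal_map (U : Set ℂ) (hU : IsOpen U)
    (φ : ℂ → ℂ) (hφ : DifferentiableOn ℂ φ U) (hφinj : Set.InjOn φ U)
    (J : Set ℂ) (hJU : J ⊆ U) (hJcpt : IsCompact J)
    (f h : ℂ → ℂ) (hf : ∀ z₀ ∈ J, HasInfDiffQuot f J z₀)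
    (hh : ∀ z ∈ J, h (φ z) = f z) :
    ∀ w₀ ∈ φ '' J, HasInfDiffQuot h (φ '' J) w₀ := by
  rintro w₀ ⟨z₀, hz₀J, rfl⟩ M hM δ hδ
  -- φ is differentiable at z₀, hence locally we have |φ z - φ z₀| ≤ C |z - z₀|
  have hdiff : DifferentiableAt ℂ φ z₀ :=
    (hφ z₀ (hJU hz₀J)).differentiableAt (hU.mem_nhds (hJU hz₀J))
  have hO : (fun z => φ z - φ z₀) =O[nhds z₀] fun z => z - z₀ :=
    hdiff.hasDerivAt.isBigO_sub
  obtain ⟨C, hC, hCev⟩ := hO.exists_pos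
  rw [Asymptotics.isBigOWith_iff, Metric.eventually_nhds_iff] at hCev
  obtain ⟨ε, hε, hball⟩ := hCev
  -- apply hf with constant M*C and radius min ε (δ/C)
  obtain ⟨z, hzJ, hz1, hz2, hz3⟩ :=
    hf z₀ hz₀J (M * C) (mul_pos hM hC) (min ε (δ / C)) (lt_min hε (div_pos hδ hC))
  have hzz₀ : z ≠ z₀ := by
    intro hzz; rw [hzz, sub_self] at hz1; simp at hz1
  have hdist : dist z z₀ < ε := by
    rw [Complex.dist_eq]
    exact hz2.trans_le (min_le_left _ _)
  have hlip : ‖φ z - φ z₀‖ ≤ C * ‖z - z₀‖ := by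
    simpa using hball hdist
  refine ⟨φ z, ⟨z, hzJ, rfl⟩, ?_, ?_, ?_⟩
  · rw [norm_pos_iff, sub_ne_zero]
    exact fun hcontra => hzz₀ (hφinj (hJU hzJ) (hJU hz₀J) hcontra)
  · calc ‖φ z - φ z₀‖ ≤ C * ‖z - z₀‖ := hlip
      _ < C * (δ / C) := by
          exact mul_lt_mul_of_pos_left (hz2.trans_le (min_le_right _ _)) hC
      _ = δ := by field_simp
  · rw [hh z hzJ, hh z₀ hz₀J]
    calc M * ‖φ z - φ z₀‖ ≤ M * (C * ‖z - z₀‖) :=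
          mul_le_mul_of_nonneg_left hlip hM.le
      _ = M * C * ‖z - z₀‖ := by ring
      _ < ‖f z - f z₀‖ := hz3
end

section
/- Let D be the open unit disc and Ω = D ∖ [0, 1/2] (the disc with the closed real segment from 0 to 1/2 removed), so that ∂Ω = 𝕋 ∪ [0, 1/2]. Then there is no function f that is continuous on cl(Ω) = cl(D) and holomorphic on Ω and has infinite difference quotients at every point z₀ ∈ ∂Ω along ∂Ω. In fact, every such f is holomorphic on all of D, and consequently for every z₀ ∈ [0, 1/2] the difference quotients of f at z₀ along ∂Ω stay bounded. -/
open Complex Set intervalIntegral Metric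

lemma horiz_cont {a₁ a₂ b₁ b₂ : ℝ} {f : ℂ → ℂ}
    (hc : ContinuousOn f (Ioo a₁ a₂ ×ℂ Ioo b₁ b₂))
    {x₁ x₂ y : ℝ} (hx₁ : x₁ ∈ Ioo a₁ a₂) (hx₂ : x₂ ∈ Ioo a₁ a₂) (hy : y ∈ Ioo b₁ b₂) :
    ContinuousOn (fun t : ℝ => f (t + y * I)) (uIcc x₁ x₂) := by
  apply hc.comp (Continuous.continuousOn (by continuity))
  intro t ht
  rw [Complex.mem_reProdIm]
  constructor <;> simp
  · rcases ht with ⟨h1, h2⟩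
    exact ⟨lt_of_lt_of_le (lt_min hx₁.1 hx₂.1) h1, lt_of_le_of_lt h2 (max_lt hx₁.2 hx₂.2)⟩
  · exact hy

lemma vert_cont {a₁ a₂ b₁ b₂ : ℝ} {f : ℂ → ℂ}
    (hc : ContinuousOn f (Ioo a₁ a₂ ×ℂ Ioo b₁ b₂))
    {x y₁ y₂ : ℝ} (hx : x ∈ Ioo a₁ a₂) (hy₁ : y₁ ∈ Ioo b₁ b₂) (hy₂ : y₂ ∈ Ioo b₁ b₂) :
    ContinuousOn (fun s : ℝ => f (x + s * I)) (uIcc y₁ y₂) := by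
  apply hc.comp (Continuous.continuousOn (by continuity))
  intro s hs
  rw [Complex.mem_reProdIm]
  constructor <;> simp
  · exact hx
  · rcases hs with ⟨h1, h2⟩
    exact ⟨lt_of_lt_of_le (lt_min hy₁.1 hy₂.1) h1, lt_of_le_of_lt h2 (max_lt hy₁.2 hy₂.2)⟩

/-- Goursat for rectangles inside `Q` whose open interior avoids the real axis. -/
lemma rect_zero_aux {a₁ a₂ b₁ b₂ : ℝ} {f : ℂ → ℂ}
    (hc : ContinuousOn f (Ioo a₁ a₂ ×ℂ Ioo b₁ b₂))
    (hd : DifferentiableOn ℂ f ((Ioo a₁ a₂ ×ℂ Ioo b₁ b₂) \ {z : ℂ | z.im = 0}))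
    {x₁ x₂ y₁ y₂ : ℝ} (hx₁ : x₁ ∈ Ioo a₁ a₂) (hx₂ : x₂ ∈ Ioo a₁ a₂)
    (hy₁ : y₁ ∈ Ioo b₁ b₂) (hy₂ : y₂ ∈ Ioo b₁ b₂)
    (h0 : (0:ℝ) ∉ Ioo (min y₁ y₂) (max y₁ y₂)) :
    (∫ x in x₁..x₂, f (x + y₁ * I)) - (∫ x in x₁..x₂, f (x + y₂ * I)) +
      I • (∫ y in y₁..y₂, f (x₂ + y * I)) - I • (∫ y in y₁..y₂, f (x₁ + y * I)) = 0 := by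
  have key := Complex.integral_boundary_rect_eq_zero_of_continuousOn_of_differentiableOn f
    (x₁ + y₁ * I) (x₂ + y₂ * I) ?_ ?_
  · simpa using key
  · apply hc.mono
    intro z hz
    rw [Complex.mem_reProdIm] at hz ⊢
    simp only [Complex.add_re, Complex.ofReal_re, Complex.mul_re, Complex.I_re, Complex.I_im,
      Complex.ofReal_im, Complex.add_im, Complex.mul_im] at hz ⊢
    constructor
    · rcases hz.1 with h
      rw [Set.uIcc_eq_union] at h
      rcases h with h | h
      · exact ⟨lt_of_lt_of_le hx₁.1 (by simpa using h.1), lt_of_le_of_lt (by simpa using h.2) hx₂.2⟩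
      · exact ⟨lt_of_lt_of_le hx₂.1 (by simpa using h.1), lt_of_le_of_lt (by simpa using h.2) hx₁.2⟩
    · rcases hz.2 with h
      rw [Set.uIcc_eq_union] at h
      rcases h with h | h
      · exact ⟨lt_of_lt_of_le hy₁.1 (by simpa using h.1), lt_of_le_of_lt (by simpa using h.2) hy₂.2⟩
      · exact ⟨lt_of_lt_of_le hy₂.1 (by simpa using h.1), lt_of_le_of_lt (by simpa using h.2) hy₁.2⟩
  · apply hd.mono
    intro z hz
    rw [Complex.mem_reProdIm] at hz
    simp only [Complex.add_re, Complex.ofReal_re, Complex.mul_re, Complex.I_re, Complex.I_im,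
      Complex.ofReal_im, Complex.add_im, Complex.mul_im] at hz
    have hzre : z.re ∈ Ioo (min x₁ x₂) (max x₁ x₂) := by simpa using hz.1
    have hzim : z.im ∈ Ioo (min y₁ y₂) (max y₁ y₂) := by simpa using hz.2
    constructor
    · rw [Complex.mem_reProdIm]
      exact ⟨⟨lt_of_le_of_lt (le_min hx₁.1.le hx₂.1.le) hzre.1,
              lt_of_lt_of_le hzre.2 (max_le hx₁.2.le hx₂.2.le)⟩,
             ⟨lt_of_le_of_lt (le_min hy₁.1.le hy₂.1.le) hzim.1,
              lt_of_lt_of_le hzim.2 (max_le hy₁.2.le hy₂.2.le)⟩⟩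
    · intro hmem
      exact h0 (by rw [Set.mem_setOf_eq] at hmem; rw [← hmem]; exact hzim)

/-- Vanishing of boundary rectangle integrals for all rectangles in `Q`. -/
lemma rect_zero {a₁ a₂ b₁ b₂ : ℝ} {f : ℂ → ℂ}
    (hc : ContinuousOn f (Ioo a₁ a₂ ×ℂ Ioo b₁ b₂))
    (hd : DifferentiableOn ℂ f ((Ioo a₁ a₂ ×ℂ Ioo b₁ b₂) \ {z : ℂ | z.im = 0}))
    {x₁ x₂ y₁ y₂ : ℝ} (hx₁ : x₁ ∈ Ioo a₁ a₂) (hx₂ : x₂ ∈ Ioo a₁ a₂)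
    (hy₁ : y₁ ∈ Ioo b₁ b₂) (hy₂ : y₂ ∈ Ioo b₁ b₂) :
    (∫ x in x₁..x₂, f (x + y₁ * I)) - (∫ x in x₁..x₂, f (x + y₂ * I)) +
      I • (∫ y in y₁..y₂, f (x₂ + y * I)) - I • (∫ y in y₁..y₂, f (x₁ + y * I)) = 0 := by
  by_cases h0 : (0:ℝ) ∈ Ioo (min y₁ y₂) (max y₁ y₂)
  · have h0b : (0:ℝ) ∈ Ioo b₁ b₂ :=
      ⟨lt_of_le_of_lt (le_min hy₁.1.le hy₂.1.le) h0.1,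
       lt_of_lt_of_le h0.2 (max_le hy₁.2.le hy₂.2.le)⟩
    have e₁ := rect_zero_aux hc hd hx₁ hx₂ hy₁ h0b (by
      rintro ⟨hl, hr⟩
      have h1 : y₁ < 0 := by rcases min_lt_iff.mp hl with h | h; exact h; linarith
      have h2 : 0 < y₁ := by rcases lt_max_iff.mp hr with h | h; exact h; linarith
      linarith)
    have e₂ := rect_zero_aux hc hd hx₁ hx₂ h0b hy₂ (by
      rintro ⟨hl, hr⟩
      have h1 : y₂ < 0 := by rcases min_lt_iff.mp hl with h | h; linarith; exact h
      have h2 : 0 < y₂ := by rcases lt_max_iff.mp hr with h | h; linarith; exact h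
      linarith)
    have i₂ : IntervalIntegrable (fun y : ℝ => f (x₂ + y * I)) MeasureTheory.volume y₁ 0 ∧
        IntervalIntegrable (fun y : ℝ => f (x₂ + y * I)) MeasureTheory.volume 0 y₂ :=
      ⟨(vert_cont hc hx₂ hy₁ h0b).intervalIntegrable,
       (vert_cont hc hx₂ h0b hy₂).intervalIntegrable⟩
    have i₁ : IntervalIntegrable (fun y : ℝ => f (x₁ + y * I)) MeasureTheory.volume y₁ 0 ∧
        IntervalIntegrable (fun y : ℝ => f (x₁ + y * I)) MeasureTheory.volume 0 y₂ :=
      ⟨(vert_cont hc hx₁ hy₁ h0b).intervalIntegrable,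
       (vert_cont hc hx₁ h0b hy₂).intervalIntegrable⟩
    have a₂ := intervalIntegral.integral_add_adjacent_intervals i₂.1 i₂.2
    have a₁ := intervalIntegral.integral_add_adjacent_intervals i₁.1 i₁.2
    have := congrArg₂ (· + ·) e₁ e₂
    simp only [add_zero] at this
    rw [← this, ← a₁, ← a₂]
    ring_nf
    simp only [add_comm ((y₁:ℂ) * I)]
    ring
  · exact rect_zero_aux hc hd hx₁ hx₂ hy₁ hy₂ h0

/-- Removable line singularity on an open rectangle straddling the real axis. -/
lemma morera_line {a₁ a₂ b₁ b₂ : ℝ} (ha : a₁ < a₂) (hb₁ : b₁ < 0) (hb₂ : 0 < b₂) {f : ℂ → ℂ}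
    (hc : ContinuousOn f (Ioo a₁ a₂ ×ℂ Ioo b₁ b₂))
    (hd : DifferentiableOn ℂ f ((Ioo a₁ a₂ ×ℂ Ioo b₁ b₂) \ {z : ℂ | z.im = 0})) :
    DifferentiableOn ℂ f (Ioo a₁ a₂ ×ℂ Ioo b₁ b₂) := by
  set Q : Set ℂ := Ioo a₁ a₂ ×ℂ Ioo b₁ b₂ with hQ
  have hQo : IsOpen Q := IsOpen.reProdIm isOpen_Ioo isOpen_Ioo
  have h0b : (0:ℝ) ∈ Ioo b₁ b₂ := ⟨hb₁, hb₂⟩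
  set p : ℝ := (a₁ + a₂) / 2 with hp
  have hpm : p ∈ Ioo a₁ a₂ := ⟨by simp [hp]; linarith, by simp [hp]; linarith⟩
  set F : ℂ → ℂ := fun z =>
    (∫ t in p..z.re, f (t + (0:ℝ) * I)) + I * ∫ s in (0:ℝ)..z.im, f (z.re + s * I) with hF
  have memQ : ∀ z : ℂ, z ∈ Q → z.re ∈ Ioo a₁ a₂ ∧ z.im ∈ Ioo b₁ b₂ := by
    intro z hz; rwa [hQ, Complex.mem_reProdIm] at hz
  -- the key difference identity
  have key : ∀ z ∈ Q, ∀ w ∈ Q, F w - F z =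
      (∫ t in z.re..w.re, f (t + z.im * I)) + I * ∫ s in z.im..w.im, f (w.re + s * I) := by
    intro z hz w hw
    obtain ⟨hzr, hzi⟩ := memQ z hz
    obtain ⟨hwr, hwi⟩ := memQ w hw
    have B := rect_zero hc hd hzr hwr h0b hzi
    have sub1 : (∫ t in p..w.re, f (t + (0:ℝ) * I)) - ∫ t in p..z.re, f (t + (0:ℝ) * I)
        = ∫ t in z.re..w.re, f (t + (0:ℝ) * I) := by
      rw [← intervalIntegral.integral_interval_sub_left
        ((horiz_cont hc hpm hwr h0b).intervalIntegrable)
        ((horiz_cont hc hpm hzr h0b).intervalIntegrable)]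
    have sub2 : (∫ s in (0:ℝ)..w.im, f (w.re + s * I)) - ∫ s in (0:ℝ)..z.im, f (w.re + s * I)
        = ∫ s in z.im..w.im, f (w.re + s * I) := by
      rw [← intervalIntegral.integral_interval_sub_left
        ((vert_cont hc hwr h0b hwi).intervalIntegrable)
        ((vert_cont hc hwr h0b hzi).intervalIntegrable)]
    have hFz : F z = (∫ t in p..z.re, f (t + (0:ℝ) * I)) + I * ∫ s in (0:ℝ)..z.im, f (z.re + s * I) := rfl
    have hFw : F w = (∫ t in p..w.re, f (t + (0:ℝ) * I)) + I * ∫ s in (0:ℝ)..w.im, f (w.re + s * I) := rfl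
    rw [hFz, hFw]
    rw [smul_eq_mul, smul_eq_mul] at B
    have := sub1
    have := sub2
    linear_combination sub1 + I * sub2 + B
  -- F has derivative f z at each z ∈ Q
  have hder : ∀ z ∈ Q, HasDerivAt F (f z) z := by
    intro z hz
    obtain ⟨hzr, hzi⟩ := memQ z hz
    rw [hasDerivAt_iff_isLittleO, Asymptotics.isLittleO_iff]
    intro c hc'
    have hfc : ContinuousAt f z := hc.continuousAt (hQo.mem_nhds hz)
    rw [Metric.continuousAt_iff] at hfc
    obtain ⟨δ₁, hδ₁, hfδ⟩ := hfc (c / 2) (by linarith)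
    obtain ⟨δ₂, hδ₂, hQδ⟩ := Metric.isOpen_iff.mp hQo z hz
    set δ : ℝ := min δ₁ δ₂ / 3 with hδdef
    have hδ : 0 < δ := by positivity
    rw [Filter.eventually_iff_exists_mem]
    refine ⟨Metric.ball z δ, Metric.ball_mem_nhds z hδ, ?_⟩
    intro w hw
    have hwz : ‖w - z‖ < δ := by rwa [Metric.mem_ball, Complex.dist_eq] at hw
    have hwQ : w ∈ Q := hQδ (by
      rw [Metric.mem_ball, Complex.dist_eq]
      calc ‖w - z‖ < δ := hwz
      _ ≤ δ₂ := by rw [hδdef]; rcases le_total δ₁ δ₂ with h | h <;> simp [min_eq_left, min_eq_right, h] <;> linarith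
      )
    -- points on the two path segments are within 3δ ≤ min δ₁ δ₂ of z and in Q
    have hnear : ∀ ζ : ℂ, ‖ζ - z‖ ≤ 2 * ‖w - z‖ → dist (f ζ) (f z) ≤ c/2 ∧ ζ ∈ Q := by
      intro ζ hζ
      have h3 : ‖ζ - z‖ < min δ₁ δ₂ := by
        calc ‖ζ - z‖ ≤ 2 * ‖w - z‖ := hζ
        _ < 2 * δ := by linarith
        _ < min δ₁ δ₂ := by
            have : 0 < min δ₁ δ₂ := lt_min hδ₁ hδ₂
            rw [hδdef]; linarith
      constructor
      · exact le_of_lt (hfδ (by rw [Complex.dist_eq]; exact lt_of_lt_of_le h3 (min_le_left _ _)))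
      · exact hQδ (by rw [Metric.mem_ball, Complex.dist_eq]; exact lt_of_lt_of_le h3 (min_le_right _ _))
    have hKey := key z hz w hwQ
    -- bound on horizontal segment
    have hb1 : ∀ t ∈ Set.uIoc z.re w.re, ‖f (t + z.im * I) - f z‖ ≤ c / 2 := by
      intro t ht
      have ht' : t ∈ Set.uIcc z.re w.re := Set.uIoc_subset_uIcc ht
      have habs : ‖(t : ℂ) + z.im * I - z‖ ≤ 2 * ‖w - z‖ := by
        have h1 : ((t : ℂ) + z.im * I - z) = ((t - z.re : ℝ) : ℂ) + ((0:ℝ):ℂ) * I := by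
          simp [Complex.ext_iff]
        rw [h1]
        simp only [Complex.ofReal_zero, zero_mul, add_zero, Complex.norm_real, Real.norm_eq_abs]
        have : |t - z.re| ≤ |w.re - z.re| := by
          rw [Set.uIcc_eq_union] at ht'
          rcases ht' with h | h <;> rw [abs_le] <;> rcases h with ⟨hh1, hh2⟩ <;>
            constructor <;> cases abs_cases (w.re - z.re) <;> try linarith
          all_goals linarith [abs_nonneg (w.re - z.re), le_abs_self (w.re - z.re), neg_abs_le (w.re - z.re)]
        calc |t - z.re| ≤ |w.re - z.re| := this
        _ = |(w - z).re| := by simp [Complex.sub_re]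
        _ ≤ ‖w - z‖ := Complex.abs_re_le_norm _
        _ ≤ 2 * ‖w - z‖ := by linarith [norm_nonneg (w - z)]
      have := (hnear _ habs).1
      rwa [dist_eq_norm] at this
    obtain ⟨hwr, hwi⟩ := memQ w hwQ
    have hb2 : ∀ s ∈ Set.uIoc z.im w.im, ‖f (w.re + s * I) - f z‖ ≤ c / 2 := by
      intro s hs
      have hs' : s ∈ Set.uIcc z.im w.im := Set.uIoc_subset_uIcc hs
      have habs : ‖(w.re : ℂ) + s * I - z‖ ≤ 2 * ‖w - z‖ := by
        have h2 : |s - z.im| ≤ |w.im - z.im| := by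
          rw [Set.uIcc_eq_union] at hs'
          rcases hs' with h | h <;> rw [abs_le] <;> rcases h with ⟨hh1, hh2⟩ <;>
            constructor <;> cases abs_cases (w.im - z.im) <;> try linarith
          all_goals linarith [abs_nonneg (w.im - z.im), le_abs_self (w.im - z.im),
            neg_abs_le (w.im - z.im)]
        calc ‖(w.re : ℂ) + s * I - z‖
            ≤ |((w.re : ℂ) + s * I - z).re| + |((w.re : ℂ) + s * I - z).im| :=
              Complex.norm_le_abs_re_add_abs_im _
          _ = |w.re - z.re| + |s - z.im| := by simp
          _ ≤ |w.re - z.re| + |w.im - z.im| := by linarith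
          _ = |(w - z).re| + |(w - z).im| := by simp [Complex.sub_re, Complex.sub_im]
          _ ≤ ‖w - z‖ + ‖w - z‖ :=
              add_le_add (Complex.abs_re_le_norm _) (Complex.abs_im_le_norm _)
          _ = 2 * ‖w - z‖ := by ring
      have := (hnear _ habs).1
      rwa [dist_eq_norm] at this
    have hgi : IntervalIntegrable (fun t : ℝ => f (t + z.im * I)) MeasureTheory.volume z.re w.re :=
      (horiz_cont hc hzr hwr hzi).intervalIntegrable
    have hhi : IntervalIntegrable (fun s : ℝ => f (w.re + s * I)) MeasureTheory.volume z.im w.im :=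
      (vert_cont hc hwr hzi hwi).intervalIntegrable
    set A : ℂ := ∫ t in z.re..w.re, (f (t + z.im * I) - f z) with hA
    set B : ℂ := ∫ s in z.im..w.im, (f (w.re + s * I) - f z) with hB
    have hAle : ‖A‖ ≤ c / 2 * |w.re - z.re| :=
      intervalIntegral.norm_integral_le_of_norm_le_const (fun t ht => hb1 t ht)
    have hBle : ‖B‖ ≤ c / 2 * |w.im - z.im| :=
      intervalIntegral.norm_integral_le_of_norm_le_const (fun s hs => hb2 s hs)
    have splitA : (∫ t in z.re..w.re, f (t + z.im * I)) = A + ((w.re - z.re : ℝ) : ℂ) * f z := by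
      rw [hA, intervalIntegral.integral_sub hgi intervalIntegrable_const,
        intervalIntegral.integral_const]
      simp [Complex.real_smul]
    have splitB : (∫ s in z.im..w.im, f (w.re + s * I)) = B + ((w.im - z.im : ℝ) : ℂ) * f z := by
      rw [hB, intervalIntegral.integral_sub hhi intervalIntegrable_const,
        intervalIntegral.integral_const]
      simp [Complex.real_smul]
    have hwz' : w - z = ((w.re - z.re : ℝ) : ℂ) + ((w.im - z.im : ℝ) : ℂ) * I := by
      simp [Complex.ext_iff]
    have hmain : F w - F z - (w - z) • f z = A + I * B := by
      rw [hKey, splitA, splitB, smul_eq_mul]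
      linear_combination (-(f z)) * hwz'
    rw [hmain]
    calc ‖A + I * B‖ ≤ ‖A‖ + ‖I * B‖ := norm_add_le _ _
      _ = ‖A‖ + ‖B‖ := by rw [norm_mul]; simp
      _ ≤ c / 2 * |w.re - z.re| + c / 2 * |w.im - z.im| := add_le_add hAle hBle
      _ ≤ c / 2 * ‖w - z‖ + c / 2 * ‖w - z‖ := by
          have h1 : |w.re - z.re| ≤ ‖w - z‖ := by
            simpa [Complex.sub_re] using Complex.abs_re_le_norm (w - z)
          have h2 : |w.im - z.im| ≤ ‖w - z‖ := by
            simpa [Complex.sub_im] using Complex.abs_im_le_norm (w - z)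
          have : (0:ℝ) ≤ c / 2 := by linarith
          exact add_le_add (mul_le_mul_of_nonneg_left h1 this) (mul_le_mul_of_nonneg_left h2 this)
      _ = c * ‖w - z‖ := by ring
  -- conclude via analyticity of the primitive
  have hFd : DifferentiableOn ℂ F Q := fun z hz =>
    ((hder z hz).differentiableAt).differentiableWithinAt
  have hAn : AnalyticOnNhd ℂ F Q := hFd.analyticOnNhd hQo
  have hAd : AnalyticOnNhd ℂ (deriv F) Q := hAn.deriv
  intro z hz
  have heq : deriv F =ᶠ[nhds z] f := by
    filter_upwards [hQo.mem_nhds hz] with w hw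
    exact (hder w hw).deriv
  exact (((hAd z hz).congr heq).differentiableAt).differentiableWithinAt



/-- For `Ω = D \ [0, 1/2]` one has `cl Ω = cl D` and `∂Ω = 𝕋 ∪ [0, 1/2]`, and every function
continuous on `cl D` and holomorphic on `Ω` is in fact holomorphic on all of `D`; hence its
difference quotients along `∂Ω` stay bounded at each point of `[0, 1/2]`, and no such
function has infinite difference quotients at every point of `∂Ω` along `∂Ω`. -/
theorem slit_disc_empty :
    let seg : Set ℂ := {z | z.im = 0 ∧ 0 ≤ z.re ∧ z.re ≤ 1 / 2}
    let Ω : Set ℂ := Metric.ball 0 1 \ seg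
    let L : Set ℂ := Metric.sphere 0 1 ∪ seg
    closure Ω = Metric.closedBall 0 1 ∧ frontier Ω = L ∧
      ∀ f : ℂ → ℂ, ContinuousOn f (Metric.closedBall 0 1) → DifferentiableOn ℂ f Ω →
        DifferentiableOn ℂ f (Metric.ball 0 1) ∧
        (∀ z₀ ∈ seg, ∃ M > (0:ℝ), ∃ δ > (0:ℝ), ∀ z ∈ L,
          ‖z - z₀‖ < δ →
            ‖f z - f z₀‖ ≤ M * ‖z - z₀‖) ∧
        ¬ (∀ z₀ ∈ L, HasInfDiffQuot f L z₀) := by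
  intro seg Ω L
  have hsegc : IsClosed seg := by
    have h : seg = Complex.im ⁻¹' {0} ∩ Complex.re ⁻¹' (Set.Icc 0 (1/2)) := by
      ext z
      simp [seg, Set.mem_Icc, and_assoc]
    rw [h]
    exact (isClosed_singleton.preimage Complex.continuous_im).inter
      (isClosed_Icc.preimage Complex.continuous_re)
  have hΩo : IsOpen Ω := Metric.isOpen_ball.sdiff hsegc
  have hsegabs : ∀ z ∈ seg, ‖z‖ ≤ 1/2 := by
    intro z hz
    obtain ⟨h1, h2, h3⟩ := hz
    have : z = (z.re : ℂ) := Complex.ext rfl (by simp [h1])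
    rw [this, Complex.norm_real, Real.norm_eq_abs, abs_le]
    constructor <;> linarith
  have hsegball : seg ⊆ Metric.ball (0:ℂ) 1 := by
    intro z hz
    rw [mem_ball_zero_iff]
    linarith [hsegabs z hz]
  have hball_closure : Metric.ball (0:ℂ) 1 ⊆ closure Ω := by
    intro z hz
    by_cases hzseg : z ∈ seg
    · have h0 : Filter.Tendsto (fun n : ℕ => (1/(n+1):ℝ)) Filter.atTop (nhds 0) :=
        tendsto_one_div_add_atTop_nhds_zero_nat
      have htend : Filter.Tendsto (fun n : ℕ => z + (1/(n+1) : ℝ) * Complex.I)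
          Filter.atTop (nhds z) := by
        have h1 := ((Complex.continuous_ofReal.tendsto 0).comp h0)
        have h2 := (h1.mul_const Complex.I).const_add z
        simpa using h2
      apply mem_closure_of_tendsto htend
      have hball : ∀ᶠ n : ℕ in Filter.atTop, z + (1/(n+1):ℝ) * Complex.I ∈ Metric.ball (0:ℂ) 1 :=
        htend.eventually (Metric.isOpen_ball.eventually_mem hz)
      filter_upwards [hball] with n hn
      refine ⟨hn, fun hmem => ?_⟩
      obtain ⟨h1, -, -⟩ := hmem
      obtain ⟨hz1, -, -⟩ := hzseg
      have him : (z + ((1/(n+1):ℝ):ℂ) * Complex.I).im = (1/(n+1):ℝ) := by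
        rw [Complex.add_im, hz1, zero_add, Complex.mul_im, Complex.I_im, Complex.I_re,
          Complex.ofReal_re, Complex.ofReal_im]
        ring
      rw [him] at h1
      have hpos : (0:ℝ) < 1/(n+1) := by positivity
      rw [h1] at hpos
      exact lt_irrefl 0 hpos
    · exact subset_closure ⟨hz, hzseg⟩
  have hclosure : closure Ω = Metric.closedBall 0 1 := by
    apply Set.Subset.antisymm
    · exact closure_minimal (Set.diff_subset.trans Metric.ball_subset_closedBall)
        Metric.isClosed_closedBall
    · rw [← closure_ball (0:ℂ) one_ne_zero]
      exact closure_minimal hball_closure isClosed_closure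
  refine ⟨hclosure, ?_, ?_⟩
  · -- frontier
    rw [frontier, hclosure, hΩo.interior_eq]
    ext z
    constructor
    · rintro ⟨h1, h2⟩
      by_cases hseg : z ∈ seg
      · exact Or.inr hseg
      · left
        rw [Metric.mem_closedBall] at h1
        have h3 : ¬ z ∈ Metric.ball (0:ℂ) 1 := fun hb => h2 ⟨hb, hseg⟩
        rw [Metric.mem_ball, not_lt] at h3
        rw [Metric.mem_sphere]
        linarith
    · rintro (h | h)
      · rw [Metric.mem_sphere] at h
        refine ⟨Metric.mem_closedBall.mpr h.le, fun hb => ?_⟩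
        rw [Set.mem_diff, Metric.mem_ball] at hb
        linarith [hb.1]
      · exact ⟨Metric.ball_subset_closedBall (hsegball h), fun hb => hb.2 h⟩
  · intro f hfc hfd
    have hball : DifferentiableOn ℂ f (Metric.ball 0 1) := by
      intro z hz
      by_cases hzseg : z ∈ seg
      · obtain ⟨hz1, hz2, hz3⟩ := hzseg
        set Q : Set ℂ := Set.Ioo (z.re - 1/8) (z.re + 1/8) ×ℂ Set.Ioo (-(1/8):ℝ) (1/8) with hQdef
        have hQsub : Q ⊆ Metric.ball (0:ℂ) 1 := by
          intro w hw
          rw [hQdef, Complex.mem_reProdIm] at hw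
          rw [mem_ball_zero_iff]
          have h1 : |w.re| ≤ 1/2 + 1/8 := by
            rw [abs_le]
            obtain ⟨ha, hb⟩ := hw.1
            constructor <;> [linarith; linarith]
          have h2 : |w.im| ≤ 1/8 := by
            rw [abs_le]
            obtain ⟨ha, hb⟩ := hw.2
            constructor <;> linarith
          calc ‖w‖ ≤ |w.re| + |w.im| := Complex.norm_le_abs_re_add_abs_im w
            _ ≤ 1/2 + 1/8 + 1/8 := by linarith
            _ < 1 := by norm_num
        have hQc : ContinuousOn f Q := hfc.mono (hQsub.trans Metric.ball_subset_closedBall)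
        have hQd : DifferentiableOn ℂ f (Q \ {w : ℂ | w.im = 0}) :=
          hfd.mono (fun w hw => ⟨hQsub hw.1, fun hwseg => hw.2 hwseg.1⟩)
        have hm := morera_line (by linarith : z.re - 1/8 < z.re + 1/8)
          (by norm_num : -(1/8:ℝ) < 0) (by norm_num : (0:ℝ) < 1/8) hQc hQd
        have hzQ : z ∈ Q := by
          rw [hQdef, Complex.mem_reProdIm]
          constructor
          · constructor <;> linarith
          · rw [hz1]; constructor <;> norm_num
        have hQo : IsOpen Q := isOpen_Ioo.reProdIm isOpen_Ioo
        exact ((hm z hzQ).differentiableAt (hQo.mem_nhds hzQ)).differentiableWithinAt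
      · exact ((hfd z ⟨hz, hzseg⟩).differentiableAt (hΩo.mem_nhds ⟨hz, hzseg⟩)).differentiableWithinAt
    have hquot : ∀ z₀ ∈ seg, ∃ M > (0:ℝ), ∃ δ > (0:ℝ), ∀ z ∈ L,
        ‖z - z₀‖ < δ → ‖f z - f z₀‖ ≤ M * ‖z - z₀‖ := by
      intro z₀ hz₀
      have hz₀b : z₀ ∈ Metric.ball (0:ℂ) 1 := hsegball hz₀
      have hda : DifferentiableAt ℂ f z₀ :=
        (hball z₀ hz₀b).differentiableAt (Metric.isOpen_ball.mem_nhds hz₀b)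
      have hdd := hda.hasDerivAt
      set c : ℂ := deriv f z₀ with hcdef
      rw [hasDerivAt_iff_isLittleO, Asymptotics.isLittleO_iff] at hdd
      have h1 := hdd (one_pos)
      rw [Metric.eventually_nhds_iff] at h1
      obtain ⟨δ, hδ, hbound⟩ := h1
      refine ⟨‖c‖ + 1, by linarith [norm_nonneg c], δ, hδ, ?_⟩
      intro z hzL hzd
      have hd' : dist z z₀ < δ := by rwa [Complex.dist_eq]
      have h2 := hbound hd'
      have h3 : f z - f z₀ = (f z - f z₀ - (z - z₀) • c) + (z - z₀) * c := by
        rw [smul_eq_mul]; ring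
      calc ‖f z - f z₀‖ = ‖f z - f z₀‖ := rfl
        _ ≤ ‖f z - f z₀ - (z - z₀) • c‖ + ‖(z - z₀) * c‖ := by
            have h4 := norm_add_le (f z - f z₀ - (z - z₀) • c) ((z - z₀) * c)
            rw [← h3] at h4
            exact h4
        _ ≤ 1 * ‖z - z₀‖ + ‖z - z₀‖ * ‖c‖ := by
            rw [norm_mul]
            exact add_le_add h2 le_rfl
        _ = (‖c‖ + 1) * ‖z - z₀‖ := by
            ring
    refine ⟨hball, hquot, ?_⟩
    intro hcontra
    have h0seg : (0:ℂ) ∈ seg := by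
      refine ⟨Complex.zero_im, ?_, ?_⟩ <;> rw [Complex.zero_re] <;> norm_num
    obtain ⟨M, hM, δ, hδ, hb⟩ := hquot 0 h0seg
    obtain ⟨z, hzL, hpos, hlt, hgt⟩ := hcontra 0 (Or.inr h0seg) M hM δ hδ
    exact absurd (hb z hzL hlt) (not_le.mpr hgt)
end

section
/- Let Ω = {z ∈ ℂ : Re z > 0} ∖ [1, +∞) (the open right half-plane with the closed real ray from 1 to infinity removed) and J = [1, +∞) ⊆ ∂Ω. Then there is no function f that is continuous on cl(Ω) and holomorphic on Ω and has infinite difference quotients at every point z₀ ∈ J along J. In fact, every such f extends holomorphically to the whole open right half-plane, and consequently for every z₀ ∈ J the difference quotients of f at z₀ along J stay bounded. -/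
namespace SlitAux

open Complex Set intervalIntegral Metric

lemma isOpen_H : IsOpen {z : ℂ | 0 < z.re} := isOpen_lt continuous_const Complex.continuous_re

lemma mem_H {x y : ℝ} (hx : 0 < x) : ((x:ℂ) + y * I) ∈ {z : ℂ | 0 < z.re} := by simp [hx]

variable {f : ℂ → ℂ}

lemma cont_horiz (Hc : ContinuousOn f {z : ℂ | 0 < z.re}) (y a b : ℝ) (ha : 0 < a) (hb : 0 < b) :
    ContinuousOn (fun x : ℝ => f ((x:ℂ) + y * I)) (uIcc a b) := by
  intro x hx
  have hx0 : 0 < x := lt_of_lt_of_le (lt_min ha hb) hx.1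
  have h1 : ContinuousAt (fun x : ℝ => (x:ℂ) + y * I) x := by fun_prop
  have h2 : ContinuousAt f ((x:ℂ) + y * I) := Hc.continuousAt (isOpen_H.mem_nhds (mem_H hx0))
  have h3 : ContinuousAt (f ∘ fun x : ℝ => (x:ℂ) + y * I) x :=
    ContinuousAt.comp (f := fun x : ℝ => (x:ℂ) + y * I) (x := x) h2 h1
  exact h3.continuousWithinAt

lemma cont_vert (Hc : ContinuousOn f {z : ℂ | 0 < z.re}) (x : ℝ) (hx : 0 < x) :
    Continuous fun y : ℝ => f ((x:ℂ) + y * I) :=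
  continuous_iff_continuousAt.2 fun y => by
    have h1 : ContinuousAt (fun y : ℝ => (x:ℂ) + y * I) y := by fun_prop
    have h2 : ContinuousAt f ((x:ℂ) + y * I) := Hc.continuousAt (isOpen_H.mem_nhds (mem_H hx))
    have h3 : ContinuousAt (f ∘ fun y : ℝ => (x:ℂ) + y * I) y :=
      ContinuousAt.comp (f := fun y : ℝ => (x:ℂ) + y * I) (x := y) h2 h1
    exact h3

lemma rect_half (Hc : ContinuousOn f {z : ℂ | 0 < z.re})
    (Hd : DifferentiableOn ℂ f ({z : ℂ | 0 < z.re} \ {z : ℂ | z.im = 0 ∧ 1 ≤ z.re}))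
    (a b y₁ y₂ : ℝ) (ha : 0 < a) (hb : 0 < b) (hy : (0:ℝ) ∉ Ioo (min y₁ y₂) (max y₁ y₂)) :
    (∫ x : ℝ in a..b, f ((x:ℂ) + y₁ * I)) - (∫ x : ℝ in a..b, f ((x:ℂ) + y₂ * I)) +
      I • (∫ y : ℝ in y₁..y₂, f ((b:ℂ) + y * I)) - I • (∫ y : ℝ in y₁..y₂, f ((a:ℂ) + y * I)) = 0 := by
  have h := Complex.integral_boundary_rect_eq_zero_of_continuousOn_of_differentiableOn f
    ⟨a, y₁⟩ ⟨b, y₂⟩ ?_ ?_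
  · exact h
  · refine Hc.mono ?_
    intro u hu
    rw [Complex.mem_reProdIm] at hu
    exact lt_of_lt_of_le (lt_min ha hb) hu.1.1
  · refine Hd.mono ?_
    intro u hu
    rw [Complex.mem_reProdIm] at hu
    refine ⟨lt_trans (lt_min ha hb) hu.1.1, ?_⟩
    rintro ⟨h0, -⟩
    exact hy (h0 ▸ hu.2)

lemma notmem_Ioo (y : ℝ) : (0:ℝ) ∉ Ioo (min y 0) (max y 0) := by
  rintro ⟨h1, h2⟩
  rcases min_lt_iff.1 h1 with h | h
  · rcases lt_max_iff.1 h2 with h' | h' <;> linarith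
  · linarith

lemma notmem_Ioo' (y : ℝ) : (0:ℝ) ∉ Ioo (min 0 y) (max 0 y) := by
  simpa [min_comm, max_comm] using notmem_Ioo y

lemma rect_full (Hc : ContinuousOn f {z : ℂ | 0 < z.re})
    (Hd : DifferentiableOn ℂ f ({z : ℂ | 0 < z.re} \ {z : ℂ | z.im = 0 ∧ 1 ≤ z.re}))
    (a b y₁ y₂ : ℝ) (ha : 0 < a) (hb : 0 < b) :
    (∫ x : ℝ in a..b, f ((x:ℂ) + y₁ * I)) - (∫ x : ℝ in a..b, f ((x:ℂ) + y₂ * I)) +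
      I • (∫ y : ℝ in y₁..y₂, f ((b:ℂ) + y * I)) - I • (∫ y : ℝ in y₁..y₂, f ((a:ℂ) + y * I)) = 0 := by
  have h1 := rect_half Hc Hd a b y₁ 0 ha hb (notmem_Ioo y₁)
  have h2 := rect_half Hc Hd a b 0 y₂ ha hb (notmem_Ioo' y₂)
  have ib : ∀ x : ℝ, 0 < x → ∀ p q : ℝ,
      IntervalIntegrable (fun y : ℝ => f ((x:ℂ) + y * I)) MeasureTheory.volume p q :=
    fun x hx p q => (cont_vert Hc x hx).intervalIntegrable p q
  have hB := intervalIntegral.integral_add_adjacent_intervals (ib b hb y₁ 0) (ib b hb 0 y₂)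
  have hA := intervalIntegral.integral_add_adjacent_intervals (ib a ha y₁ 0) (ib a ha 0 y₂)
  rw [← hB, ← hA]
  simp only [smul_eq_mul] at *
  linear_combination h1 + h2

lemma abs_sub_le_uIcc {a b x : ℝ} (hx : x ∈ uIcc a b) : |x - a| ≤ |b - a| := by
  rw [Set.mem_uIcc] at hx
  rcases hx with ⟨h1, h2⟩ | ⟨h1, h2⟩ <;> rw [abs_le] <;>
    constructor <;>
    linarith [le_abs_self (b - a), neg_abs_le (b - a)]

lemma keyDeriv (Hc : ContinuousOn f {z : ℂ | 0 < z.re})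
    (Hd : DifferentiableOn ℂ f ({z : ℂ | 0 < z.re} \ {z : ℂ | z.im = 0 ∧ 1 ≤ z.re}))
    (z : ℂ) (hz : 0 < z.re) :
    HasDerivAt (fun w : ℂ => (∫ t : ℝ in (1:ℝ)..w.re, f ((t:ℂ) + (0:ℝ) * I)) +
      I • ∫ t : ℝ in (0:ℝ)..w.im, f ((w.re : ℂ) + t * I)) (f z) z := by
  set F : ℂ → ℂ := fun w : ℂ => (∫ t : ℝ in (1:ℝ)..w.re, f ((t:ℂ) + (0:ℝ) * I)) +
      I • ∫ t : ℝ in (0:ℝ)..w.im, f ((w.re : ℂ) + t * I) with hF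
  have ih : ∀ a b : ℝ, 0 < a → 0 < b → ∀ y : ℝ,
      IntervalIntegrable (fun x : ℝ => f ((x:ℂ) + y * I)) MeasureTheory.volume a b :=
    fun a b ha hb y => (cont_horiz Hc y a b ha hb).intervalIntegrable
  have key : ∀ w : ℂ, 0 < w.re → F w - F z =
      (∫ x : ℝ in z.re..w.re, f ((x:ℂ) + z.im * I)) +
        I • ∫ t : ℝ in z.im..w.im, f ((w.re : ℂ) + t * I) := by
    intro w hw
    have hrect := rect_full Hc Hd z.re w.re 0 z.im hz hw
    have hhoriz : (∫ t : ℝ in (1:ℝ)..w.re, f ((t:ℂ) + (0:ℝ) * I)) -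
        (∫ t : ℝ in (1:ℝ)..z.re, f ((t:ℂ) + (0:ℝ) * I)) =
        ∫ t : ℝ in z.re..w.re, f ((t:ℂ) + (0:ℝ) * I) :=
      intervalIntegral.integral_interval_sub_left (ih 1 w.re one_pos hw 0) (ih 1 z.re one_pos hz 0)
    have hvert : (∫ t : ℝ in (0:ℝ)..w.im, f ((w.re:ℂ) + t * I)) -
        (∫ t : ℝ in (0:ℝ)..z.im, f ((w.re:ℂ) + t * I)) =
        ∫ t : ℝ in z.im..w.im, f ((w.re:ℂ) + t * I) :=
      intervalIntegral.integral_interval_sub_left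
        ((cont_vert Hc w.re hw).intervalIntegrable 0 w.im)
        ((cont_vert Hc w.re hw).intervalIntegrable 0 z.im)
    simp only [hF, smul_eq_mul] at *
    linear_combination hrect + hhoriz + I * hvert
  rw [hasDerivAt_iff_isLittleO, Asymptotics.isLittleO_iff]
  intro ε hε
  have hcz : ContinuousAt f z := Hc.continuousAt (isOpen_H.mem_nhds hz)
  obtain ⟨δ, hδpos, hδ⟩ := Metric.continuousAt_iff.1 hcz (ε / 2) (by positivity)
  rw [Metric.eventually_nhds_iff]
  refine ⟨min (δ / 2) (z.re / 2), by positivity, fun w hw => ?_⟩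
  have hwz : dist w z < δ / 2 := lt_of_lt_of_le hw (min_le_left _ _)
  have hwz' : dist w z < z.re / 2 := lt_of_lt_of_le hw (min_le_right _ _)
  have habs : ‖w - z‖ = dist w z := (Complex.dist_eq w z).symm
  have hre : |w.re - z.re| ≤ dist w z := by
    rw [← Complex.sub_re, ← habs]; exact Complex.abs_re_le_norm _
  have him : |w.im - z.im| ≤ dist w z := by
    rw [← Complex.sub_im, ← habs]; exact Complex.abs_im_le_norm _
  have hwre : 0 < w.re := by
    have := abs_lt.1 (lt_of_le_of_lt hre hwz'); linarith [this.1]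
  have hkey := key w hwre
  have hconst1 : (∫ _ : ℝ in z.re..w.re, f z) = ((w.re - z.re : ℝ) : ℂ) * f z := by
    rw [intervalIntegral.integral_const, Complex.real_smul]
  have hconst2 : (∫ _ : ℝ in z.im..w.im, f z) = ((w.im - z.im : ℝ) : ℂ) * f z := by
    rw [intervalIntegral.integral_const, Complex.real_smul]
  have hsub1 : (∫ x : ℝ in z.re..w.re, (f ((x:ℂ) + z.im * I) - f z)) =
      (∫ x : ℝ in z.re..w.re, f ((x:ℂ) + z.im * I)) - ∫ _ : ℝ in z.re..w.re, f z :=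
    intervalIntegral.integral_sub (ih z.re w.re hz hwre z.im)
      (intervalIntegrable_const)
  have hsub2 : (∫ t : ℝ in z.im..w.im, (f ((w.re:ℂ) + t * I) - f z)) =
      (∫ t : ℝ in z.im..w.im, f ((w.re:ℂ) + t * I)) - ∫ _ : ℝ in z.im..w.im, f z :=
    intervalIntegral.integral_sub ((cont_vert Hc w.re hwre).intervalIntegrable z.im w.im)
      (intervalIntegrable_const)
  have hwz_split : (w - z) = ((w.re - z.re : ℝ) : ℂ) + ((w.im - z.im : ℝ) : ℂ) * I := by
    apply Complex.ext <;> simp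
  have hmain : F w - F z - (w - z) • f z =
      (∫ x : ℝ in z.re..w.re, (f ((x:ℂ) + z.im * I) - f z)) +
        I * ∫ t : ℝ in z.im..w.im, (f ((w.re:ℂ) + t * I) - f z) := by
    rw [hsub1, hsub2, hconst1, hconst2, smul_eq_mul, hwz_split]
    simp only [smul_eq_mul] at hkey
    linear_combination hkey
  have hb1 : ‖∫ x : ℝ in z.re..w.re, (f ((x:ℂ) + z.im * I) - f z)‖ ≤ (ε / 2) * |w.re - z.re| := by
    apply intervalIntegral.norm_integral_le_of_norm_le_const
    intro x hx
    have hx' : x ∈ uIcc z.re w.re := Set.uIoc_subset_uIcc hx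
    have hd : dist ((x:ℂ) + z.im * I) z < δ := by
      have h1 : ((x:ℂ) + z.im * I) - z = ((x - z.re : ℝ) : ℂ) := by
        apply Complex.ext <;> simp
      rw [Complex.dist_eq, h1, Complex.norm_real, Real.norm_eq_abs]
      calc |x - z.re| ≤ |w.re - z.re| := abs_sub_le_uIcc hx'
        _ ≤ dist w z := hre
        _ < δ := by linarith
    have := hδ hd
    rw [Complex.dist_eq] at this
    exact le_of_lt (by simpa using this)
  have hb2 : ‖∫ t : ℝ in z.im..w.im, (f ((w.re:ℂ) + t * I) - f z)‖ ≤ (ε / 2) * |w.im - z.im| := by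
    apply intervalIntegral.norm_integral_le_of_norm_le_const
    intro t ht
    have ht' : t ∈ uIcc z.im w.im := Set.uIoc_subset_uIcc ht
    have hd : dist ((w.re:ℂ) + t * I) z < δ := by
      have h1 : ((w.re:ℂ) + t * I) - z = ((w.re - z.re : ℝ) : ℂ) + ((t - z.im : ℝ) : ℂ) * I := by
        apply Complex.ext <;> simp
      rw [Complex.dist_eq, h1]
      calc ‖((w.re - z.re : ℝ) : ℂ) + ((t - z.im : ℝ) : ℂ) * I‖
          ≤ ‖((w.re - z.re : ℝ) : ℂ)‖ + ‖((t - z.im : ℝ) : ℂ) * I‖ :=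
            norm_add_le _ _
        _ = |w.re - z.re| + |t - z.im| := by
            rw [norm_mul, Complex.norm_I, mul_one, Complex.norm_real, Complex.norm_real, Real.norm_eq_abs, Real.norm_eq_abs]
        _ ≤ dist w z + |w.im - z.im| := by
            have := abs_sub_le_uIcc ht'; gcongr
        _ ≤ dist w z + dist w z := by linarith
        _ < δ := by linarith
    have := hδ hd
    rw [Complex.dist_eq] at this
    exact le_of_lt (by simpa using this)
  calc ‖F w - F z - (w - z) • f z‖
      ≤ ‖∫ x : ℝ in z.re..w.re, (f ((x:ℂ) + z.im * I) - f z)‖ +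
        ‖I * ∫ t : ℝ in z.im..w.im, (f ((w.re:ℂ) + t * I) - f z)‖ := by
        rw [hmain]; exact norm_add_le _ _
    _ ≤ (ε / 2) * |w.re - z.re| + (ε / 2) * |w.im - z.im| := by
        rw [norm_mul, Complex.norm_I, one_mul]; exact add_le_add hb1 hb2
    _ ≤ (ε / 2) * ‖w - z‖ + (ε / 2) * ‖w - z‖ := by
        have h1 : |w.re - z.re| ≤ ‖w - z‖ := by rw [← Complex.sub_re]; exact Complex.abs_re_le_norm _
        have h2 : |w.im - z.im| ≤ ‖w - z‖ := by rw [← Complex.sub_im]; exact Complex.abs_im_le_norm _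
        gcongr
    _ = ε * ‖w - z‖ := by ring

lemma diffAt (Hc : ContinuousOn f {z : ℂ | 0 < z.re})
    (Hd : DifferentiableOn ℂ f ({z : ℂ | 0 < z.re} \ {z : ℂ | z.im = 0 ∧ 1 ≤ z.re}))
    (z : ℂ) (hz : 0 < z.re) : DifferentiableAt ℂ f z := by
  set F : ℂ → ℂ := fun w : ℂ => (∫ t : ℝ in (1:ℝ)..w.re, f ((t:ℂ) + (0:ℝ) * I)) +
      I • ∫ t : ℝ in (0:ℝ)..w.im, f ((w.re : ℂ) + t * I) with hF
  have hFd : DifferentiableOn ℂ F {z : ℂ | 0 < z.re} :=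
    fun u hu => (keyDeriv Hc Hd u hu).differentiableAt.differentiableWithinAt
  have han : AnalyticOnNhd ℂ F {z : ℂ | 0 < z.re} := hFd.analyticOnNhd isOpen_H
  have hder : AnalyticAt ℂ (deriv F) z := han.deriv z hz
  have heq : f =ᶠ[nhds z] deriv F := by
    filter_upwards [isOpen_H.mem_nhds hz] with u hu
    exact ((keyDeriv Hc Hd u hu).deriv).symm
  exact hder.differentiableAt.congr_of_eventuallyEq heq

lemma mem_closure (z : ℂ) (hz : 0 < z.re) :
    z ∈ closure ({z : ℂ | 0 < z.re} \ {z : ℂ | z.im = 0 ∧ 1 ≤ z.re}) := by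
  rcases eq_or_ne z.im 0 with him | him
  · rw [Metric.mem_closure_iff]
    intro ε hε
    refine ⟨z + (ε / 2 : ℝ) * I, ⟨by simpa using hz, ?_⟩, ?_⟩
    · rintro ⟨h0, -⟩
      simp [him] at h0
      linarith
    · have : z - (z + (ε / 2 : ℝ) * I) = -((ε / 2 : ℝ) * I) := by ring
      rw [Complex.dist_eq, this]
      have h2 : ‖-((ε / 2 : ℝ) * I)‖ = |ε / 2| := by
        simp [abs_div]
      rw [h2, abs_of_pos (by linarith)]
      linarith
  · exact subset_closure ⟨hz, by rintro ⟨h0, -⟩; exact him h0⟩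

end SlitAux

/-- For `Ω = {Re z > 0} \ [1, ∞)` and `J = [1, ∞) ⊆ ∂Ω`, every function continuous on `cl Ω`
and holomorphic on `Ω` extends holomorphically to the whole open right half-plane (i.e. it is
holomorphic on `{Re z > 0}`); hence its difference quotients along `J` stay bounded at every
point of `J`, and no such function has infinite difference quotients at every point of `J`
along `J`. -/
theorem slit_halfPlane_empty :
    let ray : Set ℂ := {z | z.im = 0 ∧ 1 ≤ z.re}
    let H : Set ℂ := {z | 0 < z.re}
    let Ω : Set ℂ := H \ ray
    ray ⊆ frontier Ω ∧
      ∀ f : ℂ → ℂ, ContinuousOn f (closure Ω) → DifferentiableOn ℂ f Ω →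
      DifferentiableOn ℂ f H ∧
      (∀ z₀ ∈ ray, ∃ M > (0:ℝ), ∃ δ > (0:ℝ), ∀ z ∈ ray,
        ‖z - z₀‖ < δ →
          ‖f z - f z₀‖ ≤ M * ‖z - z₀‖) ∧
      ¬ (∀ z₀ ∈ ray, HasInfDiffQuot f ray z₀) := by
  intro ray H Ω
  have hray_closed : IsClosed ray := by
    have : ray = Complex.im ⁻¹' {0} ∩ Complex.re ⁻¹' Set.Ici 1 := rfl
    rw [this]
    exact ((isClosed_singleton).preimage Complex.continuous_im).inter
      (isClosed_Ici.preimage Complex.continuous_re)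
  have hΩ_open : IsOpen Ω := SlitAux.isOpen_H.sdiff hray_closed
  have hHsub : H ⊆ closure Ω := fun z hz => SlitAux.mem_closure z hz
  constructor
  · -- ray ⊆ frontier Ω
    intro z hz
    rw [frontier, hΩ_open.interior_eq]
    exact ⟨hHsub (lt_of_lt_of_le one_pos hz.2), fun h => h.2 hz⟩
  · intro f hfc hfd
    have Hc : ContinuousOn f {z : ℂ | 0 < z.re} := hfc.mono hHsub
    have hdiff : ∀ z ∈ H, DifferentiableAt ℂ f z := fun z hz => SlitAux.diffAt Hc hfd z hz
    have hDH : DifferentiableOn ℂ f H := fun z hz => (hdiff z hz).differentiableWithinAt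
    have hbdd : ∀ z₀ ∈ ray, ∃ M > (0:ℝ), ∃ δ > (0:ℝ), ∀ z ∈ ray,
        ‖z - z₀‖ < δ →
          ‖f z - f z₀‖ ≤ M * ‖z - z₀‖ := by
      intro z₀ hz₀
      have hz₀H : z₀ ∈ H := lt_of_lt_of_le one_pos hz₀.2
      have hd := (hdiff z₀ hz₀H).hasDerivAt
      rw [hasDerivAt_iff_isLittleO] at hd
      have h1 := hd.def one_pos
      rw [Metric.eventually_nhds_iff] at h1
      obtain ⟨δ, hδpos, hδ⟩ := h1
      refine ⟨‖deriv f z₀‖ + 1, by positivity, δ, hδpos, fun z hz hzd => ?_⟩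
      have hdist : dist z z₀ < δ := by rwa [Complex.dist_eq]
      have h2 := hδ hdist
      simp only [norm_mul, one_mul] at h2
      have h3 : ‖f z - f z₀ - (z - z₀) • deriv f z₀‖ ≤ ‖z - z₀‖ := h2
      have h4 : ‖f z - f z₀‖ ≤
          ‖(z - z₀) * deriv f z₀‖ + ‖z - z₀‖ := by
        have := norm_add_le ((f z - f z₀ - (z - z₀) • deriv f z₀)) ((z - z₀) • deriv f z₀)
        simp only [sub_add_cancel, smul_eq_mul] at this
        calc ‖f z - f z₀‖ = ‖f z - f z₀‖ := rfl
          _ ≤ ‖f z - f z₀ - (z - z₀) * deriv f z₀‖ + ‖(z - z₀) * deriv f z₀‖ := this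
          _ ≤ ‖z - z₀‖ + ‖(z - z₀) * deriv f z₀‖ := by
              have h5 : ‖f z - f z₀ - (z - z₀) * deriv f z₀‖ ≤ ‖z - z₀‖ := h3
              gcongr
          _ = ‖(z - z₀) * deriv f z₀‖ + ‖z - z₀‖ := by
              rw [add_comm]
      rw [norm_mul] at h4
      calc ‖f z - f z₀‖
          ≤ ‖z - z₀‖ * ‖deriv f z₀‖ + ‖z - z₀‖ := h4
        _ = (‖deriv f z₀‖ + 1) * ‖z - z₀‖ := by ring
    refine ⟨hDH, hbdd, ?_⟩
    intro hcontra
    have h1ray : (1:ℂ) ∈ ray := ⟨Complex.one_im, by rw [Complex.one_re]⟩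
    obtain ⟨M, hM, δ, hδ, hb⟩ := hbdd 1 h1ray
    obtain ⟨z, hzray, hzpos, hzδ, hzgt⟩ := hcontra 1 h1ray M hM δ hδ
    have := hb z hzray hzδ
    linarith
end
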